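/- arXiv:math/0410545 — 2 statements merged into one kernel-verified Lean document; each statement's English description precedes it below -/
import Mathlib

section
/- Let P be a lazy, irreducible, aperiodic Markov chain on a finite state space K with stationary distribution π, and let A ⊆ K with 0 < π(A) ≤ 1/2. Then the evolving-set quantity satisfies ψ_evo(A) ≥ (1/4)·ψ̄⁺(A). -/
open Finset MeasureTheory

noncomputable section

attribute [local instance] Classical.propDecidable

variable {K : Type*} [Fintype K]

/-- `matPow P t u v` is the `t`-step transition probability from `u` to `v`. -/
def matPow (P : K → K → ℝ) : ℕ → K → K → ℝ
  | 0 => fun u v => if u = v then 1 else 0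
  | (t + 1) => fun u v => ∑ w, matPow P t u w * P w v

/-- `P` is a stochastic matrix with (strictly positive) stationary distribution `π`. -/
structure IsMarkov (P : K → K → ℝ) (π : K → ℝ) : Prop where
  nonneg : ∀ u v, 0 ≤ P u v
  rowSum : ∀ u, ∑ v, P u v = 1
  piPos : ∀ v, 0 < π v
  piSum : ∑ v, π v = 1
  stationary : ∀ v, ∑ u, π u * P u v = π v

/-- `P` is lazy: every holding probability is at least `1/2`. -/
def IsLazy (P : K → K → ℝ) : Prop := ∀ u, (1 : ℝ) / 2 ≤ P u u

/-- irreducibility: every state can reach every other state. -/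
def MCIrreducible (P : K → K → ℝ) : Prop := ∀ u v : K, ∃ t : ℕ, 0 < matPow P t u v

/-- aperiodicity: the gcd of the return times of every state is `1`. -/
def MCAperiodic (P : K → K → ℝ) : Prop :=
  ∀ u : K, ∀ d : ℕ, (∀ t : ℕ, 0 < matPow P t u u → d ∣ t) → d ≤ 1

/-- reversibility: the detailed balance condition. -/
def IsReversible (P : K → K → ℝ) (π : K → ℝ) : Prop :=
  ∀ u v, π u * P u v = π v * P v u

/-- `π`-measure of a set. -/
def meas (π : K → ℝ) (A : Finset K) : ℝ := ∑ v ∈ A, π v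

/-- the time reversal `P̄(u,v) = π(v) P(v,u) / π(u)`. -/
def rev (P : K → K → ℝ) (π : K → ℝ) (u v : K) : ℝ := π v * P v u / π u

/-- transition probability from a point into a set, w.r.t. kernel `R`. -/
def setProb (R : K → K → ℝ) (v : K) (C : Finset K) : ℝ := ∑ c ∈ C, R v c

/-- the level set `A_u = {y : R(y,A) > u}`, w.r.t. kernel `R`. -/
def levelSet (R : K → K → ℝ) (A : Finset K) (u : ℝ) : Finset K :=
  Finset.univ.filter (fun y => u < setProb R y A)

/-- `g` is a fractional subset of `S` of measure `t`. -/
def IsFracSub (π : K → ℝ) (S : Finset K) (g : K → ℝ) (t : ℝ) : Prop :=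
  (∀ v, 0 ≤ g v ∧ g v ≤ 1) ∧ (∀ v ∉ S, g v = 0) ∧ ∑ v, g v * π v = t

/-- ergodic flow from a fractional subset `g` into `C`, w.r.t. kernel `R`. -/
def fracFlow (R : K → K → ℝ) (π : K → ℝ) (g : K → ℝ) (C : Finset K) : ℝ :=
  ∑ v, g v * π v * setProb R v C

/-- `Ψ(t, Aᶜ)` w.r.t. kernel `R`: for `t ≤ π(A)` the minimal flow into `Aᶜ` from a
fractional subset of `A` of measure `t`; for `t > π(A)` the minimal flow into `A`
from a fractional subset of `Aᶜ` of measure `1 − t`. -/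
def Psi (R : K → K → ℝ) (π : K → ℝ) (A : Finset K) (t : ℝ) : ℝ :=
  if t ≤ meas π A then
    sInf {q : ℝ | ∃ g : K → ℝ, IsFracSub π A g t ∧ q = fracFlow R π g Aᶜ}
  else
    sInf {q : ℝ | ∃ g : K → ℝ, IsFracSub π Aᶜ g (1 - t) ∧ q = fracFlow R π g A}

/-- `Ψ_big(t, Aᶜ)` w.r.t. kernel `R`: maximal flow into `Aᶜ` from a fractional
subset of `A` of measure `t`. -/
def PsiSup (R : K → K → ℝ) (π : K → ℝ) (A : Finset K) (t : ℝ) : ℝ :=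
  sSup {q : ℝ | ∃ g : K → ℝ, IsFracSub π A g t ∧ q = fracFlow R π g Aᶜ}

/-- the spread `ψ⁺(A)` (w.r.t. kernel `R`). -/
def psiPlus (R : K → K → ℝ) (π : K → ℝ) (A : Finset K) : ℝ :=
  (∫ t in (0:ℝ)..(meas π A), Psi R π A t) / (meas π A) ^ 2

/-- the quantity `ψ⁻(A)` (w.r.t. kernel `R`). -/
def psiMinus (R : K → K → ℝ) (π : K → ℝ) (A : Finset K) : ℝ :=
  (∫ t in (meas π A)..(1:ℝ), Psi R π A t) / (meas π A) ^ 2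

/-- the modified spread `ψ_mod(A)` (w.r.t. kernel `R`). -/
def psiMod (R : K → K → ℝ) (π : K → ℝ) (A : Finset K) : ℝ :=
  (∫ t in (0:ℝ)..(1:ℝ), Psi R π A t / min t (1 - t)) / meas π A

/-- the global spread `ψ_gl(A)` (w.r.t. kernel `R`). -/
def psiGl (R : K → K → ℝ) (π : K → ℝ) (A : Finset K) : ℝ :=
  (∫ t in (0:ℝ)..(1:ℝ), Psi R π A t) / (meas π A) ^ 2

/-- the quantity `ψ_big(A)` (w.r.t. kernel `R`). -/
def psiBig (R : K → K → ℝ) (π : K → ℝ) (A : Finset K) : ℝ :=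
  (∫ t in (0:ℝ)..(meas π A), PsiSup R π A t) / (meas π A) ^ 2

/-- the evolving-set quantity `ψ_evo(A)`, with level sets taken w.r.t. kernel `R`. -/
def psiEvo (R : K → K → ℝ) (π : K → ℝ) (A : Finset K) : ℝ :=
  1 - ∫ u in (0:ℝ)..(1:ℝ), Real.sqrt (meas π (levelSet R A u) / meas π A)

/-- ergodic flow `Q(B,C)`. -/
def ergFlow (P : K → K → ℝ) (π : K → ℝ) (B C : Finset K) : ℝ :=
  ∑ u ∈ B, ∑ v ∈ C, π u * P u v

/-- conductance `Φ(A)`. -/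
def conductance (P : K → K → ℝ) (π : K → ℝ) (A : Finset K) : ℝ :=
  ergFlow P π A Aᶜ / meas π A

def Qone (P : K → K → ℝ) (π : K → ℝ) (C D : Finset K) : ℝ :=
  ∑ v ∈ C, setProb P v D * π v

def Qtwo (P : K → K → ℝ) (π : K → ℝ) (C D : Finset K) : ℝ :=
  ∑ v ∈ C, Real.sqrt (setProb P v D) * π v

def Qinfty (P : K → K → ℝ) (π : K → ℝ) (C D : Finset K) : ℝ :=
  meas π (C.filter (fun v => 0 < setProb P v D))

/-- discrete gradient `h₁⁺(A)`. -/
def hOneP (P : K → K → ℝ) (π : K → ℝ) (A : Finset K) : ℝ :=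
  Qone P π A Aᶜ / min (meas π A) (meas π Aᶜ)

/-- discrete gradient `h₁⁻(A)`. -/
def hOneM (P : K → K → ℝ) (π : K → ℝ) (A : Finset K) : ℝ :=
  Qone P π Aᶜ A / min (meas π A) (meas π Aᶜ)

/-- discrete gradient `h₂⁺(A)`. -/
def hTwoP (P : K → K → ℝ) (π : K → ℝ) (A : Finset K) : ℝ :=
  Qtwo P π A Aᶜ / min (meas π A) (meas π Aᶜ)

/-- discrete gradient `h₂⁻(A)`. -/
def hTwoM (P : K → K → ℝ) (π : K → ℝ) (A : Finset K) : ℝ :=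
  Qtwo P π Aᶜ A / min (meas π A) (meas π Aᶜ)

/-- discrete gradient `h_∞⁺(A)`. -/
def hInfP (P : K → K → ℝ) (π : K → ℝ) (A : Finset K) : ℝ :=
  Qinfty P π A Aᶜ / min (meas π A) (meas π Aᶜ)

/-- discrete gradient `h_∞⁻(A)`. -/
def hInfM (P : K → K → ℝ) (π : K → ℝ) (A : Finset K) : ℝ :=
  Qinfty P π Aᶜ A / min (meas π A) (meas π Aᶜ)

/-- `p` is a probability distribution. -/
def IsDist (p : K → ℝ) : Prop := (∀ v, 0 ≤ p v) ∧ ∑ v, p v = 1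

/-- the distribution after `t` steps starting from `p`. -/
def stepDist (P : K → K → ℝ) (p : K → ℝ) (t : ℕ) (v : K) : ℝ :=
  ∑ u, p u * matPow P t u v

/-- total variation distance. -/
def tvDist (μ π : K → ℝ) : ℝ := (1 / 2) * ∑ v, |μ v - π v|

/-- chi-square distance. -/
def chi2Dist (μ π : K → ℝ) : ℝ := ∑ v, (μ v / π v - 1) ^ 2 * π v

/-- total variation mixing time `τ(ε)`: the max over initial distributions of the
least time at which total variation distance drops to `ε`. -/
def mixTV (P : K → K → ℝ) (π : K → ℝ) (ε : ℝ) : ℕ :=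
  sSup {n : ℕ | ∃ p : K → ℝ, IsDist p ∧
    n = sInf {t : ℕ | tvDist (stepDist P p t) π ≤ ε}}

/-- chi-square mixing time `χ²(ε)`. -/
def mixChi2 (P : K → K → ℝ) (π : K → ℝ) (ε : ℝ) : ℕ :=
  sSup {n : ℕ | ∃ p : K → ℝ, IsDist p ∧
    n = sInf {t : ℕ | chi2Dist (stepDist P p t) π ≤ ε}}

/-- `π₀ = min_v π(v)`. -/
def piMin (π : K → ℝ) : ℝ := sInf {r : ℝ | ∃ v : K, r = π v}

/-- `ψ⁺(x)`: worst spread over sets of measure at most `x`. -/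
def psiPlusSize (R : K → K → ℝ) (π : K → ℝ) (x : ℝ) : ℝ :=
  sInf {r : ℝ | ∃ A : Finset K, 0 < meas π A ∧ meas π A ≤ x ∧ r = psiPlus R π A}

/-- `ψ_evo(x)`: worst evolving-set quantity over sets of measure at most `x`. -/
def psiEvoSize (R : K → K → ℝ) (π : K → ℝ) (x : ℝ) : ℝ :=
  sInf {r : ℝ | ∃ A : Finset K, 0 < meas π A ∧ meas π A ≤ x ∧ r = psiEvo R π A}

/-- `ψ_big(x)`: worst `ψ_big` over sets of measure at most `x`. -/
def psiBigSize (R : K → K → ℝ) (π : K → ℝ) (x : ℝ) : ℝ :=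
  sInf {r : ℝ | ∃ A : Finset K, 0 < meas π A ∧ meas π A ≤ x ∧ r = psiBig R π A}

/-- Dirichlet form. -/
def dirichletForm (P : K → K → ℝ) (π : K → ℝ) (f : K → ℝ) : ℝ :=
  (1 / 2) * ∑ u, ∑ v, π u * P u v * (f u - f v) ^ 2

/-- variance w.r.t. `π`. -/
def varPi (π : K → ℝ) (f : K → ℝ) : ℝ :=
  ∑ v, π v * f v ^ 2 - (∑ v, π v * f v) ^ 2

/-- the spectral gap `λ`. -/
def specGap (P : K → K → ℝ) (π : K → ℝ) : ℝ :=
  sInf {r : ℝ | ∃ f : K → ℝ, (∃ u v, f u ≠ f v) ∧ r = dirichletForm P π f / varPi π f}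

/-- `P_* = 1 − min_{u ∈ A} P(u, A)`. -/
def Pstar (P : K → K → ℝ) (A : Finset K) : ℝ :=
  1 - sInf {r : ℝ | ∃ u ∈ A, r = setProb P u A}

/-- `P_min = min {P(u,v)/π(v) : u ∈ A, v ∈ Aᶜ, P(u,v) > 0}`. -/
def PminEdge (P : K → K → ℝ) (π : K → ℝ) (A : Finset K) : ℝ :=
  sInf {r : ℝ | ∃ u ∈ A, ∃ v ∈ Aᶜ, 0 < P u v ∧ r = P u v / π v}

/-- `w(t) = inf {y ∈ [0,1] : π(A_y) ≤ t}`. -/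
def wfun (R : K → K → ℝ) (π : K → ℝ) (A : Finset K) (t : ℝ) : ℝ :=
  sInf {y : ℝ | y ∈ Set.Icc (0:ℝ) 1 ∧ meas π (levelSet R A y) ≤ t}


/-! ### Auxiliary development for the proof -/

section ProofAux
set_option linter.unusedSectionVars false
attribute [local instance 2000] Classical.propDecidable

lemma meas_nonneg' (π : K → ℝ) (hπ : ∀ v, 0 < π v) (S : Finset K) : 0 ≤ meas π S :=
  Finset.sum_nonneg fun v _ => (hπ v).le

lemma meas_mono' (π : K → ℝ) (hπ : ∀ v, 0 < π v) {S T : Finset K} (h : S ⊆ T) :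
    meas π S ≤ meas π T :=
  Finset.sum_le_sum_of_subset_of_nonneg h fun v _ _ => (hπ v).le

lemma setProb_nonneg' (R : K → K → ℝ) (hR : ∀ v w, 0 ≤ R v w) (v : K) (C : Finset K) :
    0 ≤ setProb R v C := Finset.sum_nonneg fun x _ => hR v x

lemma setProb_compl' (R : K → K → ℝ) (hrow : ∀ v, ∑ w, R v w = 1) (v : K) (C : Finset K) :
    setProb R v C + setProb R v Cᶜ = 1 := by
  rw [setProb, setProb, Finset.sum_add_sum_compl]; exact hrow v

lemma setProb_le_one' (R : K → K → ℝ) (hR : ∀ v w, 0 ≤ R v w) (hrow : ∀ v, ∑ w, R v w = 1)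
    (v : K) (C : Finset K) : setProb R v C ≤ 1 := by
  have h1 := setProb_compl' R hrow v C
  have h2 := setProb_nonneg' R hR v Cᶜ
  linarith

lemma antitone_if_lt (p c : ℝ) (hp : 0 ≤ p) :
    Antitone (fun u : ℝ => if u < c then p else 0) := by
  intro x y hxy
  by_cases hy : y < c
  · simp [hy, lt_of_le_of_lt hxy hy]
  · simp only [if_neg hy]
    split_ifs
    · exact hp
    · exact le_rfl

lemma monotone_if_le (p c : ℝ) (hp : 0 ≤ p) :
    Monotone (fun u : ℝ => if c ≤ u then p else 0) := by
  intro x y hxy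
  by_cases hx : c ≤ x
  · simp [hx, hx.trans hxy]
  · simp only [if_neg hx]
    split_ifs
    · exact hp
    · exact le_rfl

lemma integral_if_lt (p c α β : ℝ) (hp : 0 ≤ p) (h1 : α ≤ c) (h2 : c ≤ β) :
    (∫ u in α..β, if u < c then p else 0) = p * (c - α) := by
  have hint : ∀ γ δ : ℝ, IntervalIntegrable (fun u : ℝ => if u < c then p else 0) volume γ δ :=
    fun γ δ => ((antitone_if_lt p c hp).antitoneOn _).intervalIntegrable
  have i1 : (∫ u in α..c, if u < c then p else 0) = p * (c - α) := by
    have hne : ∀ᵐ x : ℝ, x ≠ c := by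
      rw [MeasureTheory.ae_iff]
      have : {x : ℝ | ¬x ≠ c} = {c} := by ext x; simp
      rw [this]
      exact MeasureTheory.measure_singleton c
    have hae : ∀ᵐ x : ℝ, x ∈ Set.uIoc α c → (if x < c then p else 0) = p := by
      filter_upwards [hne] with x hx hmem
      rw [Set.uIoc_of_le h1] at hmem
      exact if_pos (lt_of_le_of_ne hmem.2 hx)
    rw [intervalIntegral.integral_congr_ae hae, intervalIntegral.integral_const, smul_eq_mul]
    ring
  have i2 : (∫ u in c..β, if u < c then p else 0) = 0 := by
    have heq : Set.EqOn (fun u : ℝ => if u < c then p else 0) (fun _ => (0 : ℝ))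
        (Set.uIcc c β) := by
      intro x hx
      rw [Set.uIcc_of_le h2] at hx
      exact if_neg (not_lt.mpr hx.1)
    rw [intervalIntegral.integral_congr heq, intervalIntegral.integral_zero]
  rw [← intervalIntegral.integral_add_adjacent_intervals (hint α c) (hint c β), i1, i2, add_zero]

lemma integral_if_le (p c α β : ℝ) (hp : 0 ≤ p) (h1 : α ≤ c) (h2 : c ≤ β) :
    (∫ u in α..β, if c ≤ u then p else 0) = p * (β - c) := by
  have heq : (fun u : ℝ => if c ≤ u then p else 0)
      = fun u => p - (if u < c then p else 0) := by
    funext u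
    by_cases h : c ≤ u
    · rw [if_pos h, if_neg (not_lt.mpr h)]; ring
    · rw [if_neg h, if_pos (lt_of_not_ge h)]; ring
  rw [heq, intervalIntegral.integral_sub intervalIntegrable_const
      (((antitone_if_lt p c hp).antitoneOn _).intervalIntegrable),
    intervalIntegral.integral_const, integral_if_lt p c α β hp h1 h2, smul_eq_mul]
  ring

lemma clamp_mono (b p : ℝ) (hp : 0 < p) :
    Monotone (fun t : ℝ => min 1 (max 0 ((t - b) / p))) := by
  intro x y hxy
  refine min_le_min le_rfl (max_le_max le_rfl ?_)
  gcongr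

lemma clamp_mul (t b p : ℝ) (hp : 0 < p) :
    min 1 (max 0 ((t - b) / p)) * p = min t (b + p) - min t b := by
  rcases le_total t b with h | h
  · have h1 : (t - b) / p ≤ 0 := by
      rw [div_nonpos_iff]; exact Or.inr ⟨by linarith, hp.le⟩
    rw [max_eq_left h1, min_eq_right (le_refl (0:ℝ) |>.trans zero_le_one), zero_mul,
      min_eq_left (h.trans (le_add_of_nonneg_right hp.le)), min_eq_left h]
    ring
  · rcases le_total t (b + p) with h2 | h2
    · have h0 : 0 ≤ (t - b) / p := div_nonneg (by linarith) hp.le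
      rw [max_eq_right h0, min_eq_right ((div_le_one hp).mpr (by linarith)),
        div_mul_cancel₀ _ hp.ne', min_eq_left h2, min_eq_right h]
    · have h0 : 1 ≤ (t - b) / p := (one_le_div hp).mpr (by linarith)
      rw [max_eq_right (zero_le_one.trans h0), min_eq_left h0, one_mul,
        min_eq_right h2, min_eq_right h]
      ring

lemma integral_clamp (b p a : ℝ) (hb : 0 ≤ b) (hp : 0 < p) (hba : b + p ≤ a) :
    (∫ t in (0:ℝ)..a, min 1 (max 0 ((t - b) / p))) = a - b - p / 2 := by
  have hmono := clamp_mono b p hp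
  have hint : ∀ γ δ : ℝ, IntervalIntegrable (fun t : ℝ => min 1 (max 0 ((t - b) / p)))
      volume γ δ := fun γ δ => (hmono.monotoneOn _).intervalIntegrable
  have i1 : (∫ t in (0:ℝ)..b, min 1 (max 0 ((t - b) / p))) = 0 := by
    have heq : Set.EqOn (fun t : ℝ => min 1 (max 0 ((t - b) / p))) (fun _ => (0 : ℝ))
        (Set.uIcc 0 b) := by
      intro x hx
      rw [Set.uIcc_of_le hb] at hx
      have h1 : (x - b) / p ≤ 0 := by
        rw [div_nonpos_iff]; exact Or.inr ⟨by linarith [hx.2], hp.le⟩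
      simp [max_eq_left h1]
    rw [intervalIntegral.integral_congr heq, intervalIntegral.integral_zero]
  have i2 : (∫ t in b..(b + p), min 1 (max 0 ((t - b) / p))) = p / 2 := by
    have heq : Set.EqOn (fun t : ℝ => min 1 (max 0 ((t - b) / p)))
        (fun t => t * p⁻¹ - b * p⁻¹) (Set.uIcc b (b + p)) := by
      intro x hx
      rw [Set.uIcc_of_le (by linarith : b ≤ b + p)] at hx
      have h0 : 0 ≤ (x - b) / p := div_nonneg (by linarith [hx.1]) hp.le
      have h1 : (x - b) / p ≤ 1 := (div_le_one hp).mpr (by linarith [hx.2])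
      simp only [max_eq_right h0, min_eq_right h1]
      rw [sub_div, div_eq_mul_inv, div_eq_mul_inv]
    rw [intervalIntegral.integral_congr heq,
      intervalIntegral.integral_sub
        ((by exact (continuous_id.mul continuous_const).intervalIntegrable _ _ :
          IntervalIntegrable (fun x : ℝ => x * p⁻¹) volume b (b + p)))
        intervalIntegrable_const,
      intervalIntegral.integral_mul_const, integral_id,
      intervalIntegral.integral_const, smul_eq_mul]
    have hpinv : p * p⁻¹ = 1 := mul_inv_cancel₀ hp.ne'
    linear_combination (p / 2) * hpinv
  have i3 : (∫ t in (b + p)..a, min 1 (max 0 ((t - b) / p))) = a - (b + p) := by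
    have heq : Set.EqOn (fun t : ℝ => min 1 (max 0 ((t - b) / p))) (fun _ => (1 : ℝ))
        (Set.uIcc (b + p) a) := by
      intro x hx
      rw [Set.uIcc_of_le hba] at hx
      have h1 : 1 ≤ (x - b) / p := (one_le_div hp).mpr (by linarith [hx.1])
      simp [min_eq_left h1, max_eq_right (zero_le_one.trans h1)]
    rw [intervalIntegral.integral_congr heq, intervalIntegral.integral_const, smul_eq_mul,
      mul_one]
  rw [← intervalIntegral.integral_add_adjacent_intervals (hint 0 b) (hint b a),
    ← intervalIntegral.integral_add_adjacent_intervals (hint b (b + p)) (hint (b + p) a),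
    i1, i2, i3]
  ring

lemma poly_aux (s : ℝ) (h0 : 0 ≤ s) (h1 : s ≤ 1) :
    s ≤ (1 + s ^ 2) / 2 - (1 - s ^ 2) ^ 2 / 8 := by
  nlinarith [mul_nonneg (mul_nonneg (mul_nonneg (sub_nonneg.2 h1) (sub_nonneg.2 h1))
    (sub_nonneg.2 h1)) (by linarith : (0 : ℝ) ≤ 3 + s)]

lemma sqrt_le_half (z : ℝ) (hz : 0 ≤ z) : Real.sqrt z ≤ (1 + z) / 2 := by
  nlinarith [Real.sq_sqrt hz, Real.sqrt_nonneg z, sq_nonneg (Real.sqrt z - 1)]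

lemma sqrt_le_better (z : ℝ) (hz : 0 ≤ z) (hz1 : z ≤ 1) :
    Real.sqrt z ≤ (1 + z) / 2 - (1 - z) ^ 2 / 8 := by
  have h2 : Real.sqrt z ^ 2 = z := Real.sq_sqrt hz
  have := poly_aux (Real.sqrt z) (Real.sqrt_nonneg z) (Real.sqrt_le_one.mpr hz1)
  rw [h2] at this
  exact this

/-- mass of states with key strictly below that of `v`. -/
def bmass {α : Type*} [LinearOrder α] (π : K → ℝ) (key : K → α) (A : Finset K) (v : K) : ℝ :=
  meas π (A.filter fun w => key w < key v)

/-- greedy fractional subset of `A` of measure `t`, filling states in key order. -/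
def greedy {α : Type*} [LinearOrder α] (π : K → ℝ) (key : K → α) (A : Finset K) (t : ℝ)
    (v : K) : ℝ :=
  if v ∈ A then min 1 (max 0 ((t - bmass π key A v) / π v)) else 0

lemma telescope {α : Type*} [LinearOrder α] (π : K → ℝ) (key : K → α)
    (hkinj : Function.Injective key) (A : Finset K) (t : ℝ) (ht : 0 ≤ t) :
    ∀ S : Finset K, S ⊆ A → (∀ v ∈ S, ∀ w ∈ A, key w < key v → w ∈ S) →
      (∑ v ∈ S, (min t (bmass π key A v + π v) - min t (bmass π key A v)))
        = min t (meas π S) := by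
  intro S
  induction S using Finset.strongInduction with
  | _ S ih =>
    intro hSA hdc
    rcases S.eq_empty_or_nonempty with rfl | hne
    · simp [meas, min_eq_right ht]
    · obtain ⟨v₀, hv₀S, hmax⟩ := S.exists_max_image key hne
      have hBv : A.filter (fun w => key w < key v₀) = S.erase v₀ := by
        ext w
        simp only [Finset.mem_filter, Finset.mem_erase]
        constructor
        · rintro ⟨hwA, hlt⟩
          refine ⟨?_, hdc v₀ hv₀S w hwA hlt⟩
          rintro rfl; exact lt_irrefl _ hlt
        · rintro ⟨hne', hwS⟩
          exact ⟨hSA hwS, lt_of_le_of_ne (hmax w hwS) fun h => hne' (hkinj h)⟩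
      have hdc' : ∀ v ∈ S.erase v₀, ∀ w ∈ A, key w < key v → w ∈ S.erase v₀ := by
        intro v hv w hwA hlt
        have hvS := Finset.mem_of_mem_erase hv
        refine Finset.mem_erase.mpr ⟨?_, hdc v hvS w hwA hlt⟩
        rintro rfl
        exact absurd (hmax v hvS) (not_le.mpr hlt)
      have hIH := ih (S.erase v₀) (Finset.erase_ssubset hv₀S)
        ((Finset.erase_subset _ _).trans hSA) hdc'
      have hmeas : meas π (S.erase v₀) + π v₀ = meas π S := Finset.sum_erase_add S π hv₀S
      rw [← Finset.sum_erase_add S _ hv₀S, hIH,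
        show bmass π key A v₀ = meas π (S.erase v₀) by rw [bmass, hBv], hmeas]
      ring

lemma greedy_isFracSub {α : Type*} [LinearOrder α] (π : K → ℝ) (key : K → α)
    (hπ : ∀ v, 0 < π v) (hkinj : Function.Injective key) (A : Finset K)
    (t : ℝ) (ht0 : 0 ≤ t) (hta : t ≤ meas π A) :
    IsFracSub π A (greedy π key A t) t := by
  refine ⟨fun v => ⟨?_, ?_⟩, fun v hv => by rw [greedy, if_neg hv], ?_⟩
  · rw [greedy]; split_ifs
    · exact le_min zero_le_one (le_max_left _ _)
    · exact le_rfl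
  · rw [greedy]; split_ifs
    · exact min_le_left _ _
    · exact zero_le_one
  · have hzero : ∀ v ∈ Finset.univ, v ∉ A → greedy π key A t v * π v = 0 :=
      fun v _ hv => by rw [greedy, if_neg hv, zero_mul]
    rw [← Finset.sum_subset (Finset.subset_univ A) hzero]
    have hterm : ∀ v ∈ A, greedy π key A t v * π v
        = min t (bmass π key A v + π v) - min t (bmass π key A v) := by
      intro v hv
      rw [greedy, if_pos hv]
      exact clamp_mul t _ (π v) (hπ v)
    rw [Finset.sum_congr rfl hterm,
      telescope π key hkinj A t ht0 A (subset_refl A) (fun v _ w hw _ => hw),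
      min_eq_left hta]

lemma sum_pair_algebra {α : Type*} [LinearOrder α] (π : K → ℝ) (c : K → ℝ) (key : K → α)
    (hkinj : Function.Injective key) (hc : ∀ v w, key v < key w → c v ≤ c w) (A : Finset K) :
    ∑ v ∈ A, (meas π A - bmass π key A v - π v / 2) * (π v * c v)
      = (1 / 2) * ∑ v ∈ A, ∑ w ∈ A, π v * π w * min (c v) (c w) := by
  classical
  set f : K → K → ℝ := fun v w =>
    ((if key w < key v then 0 else π w) - (if w = v then π w / 2 else 0)) * (π v * c v)
    with hf
  have hd : ∀ v ∈ A, meas π A - bmass π key A v - π v / 2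
      = ∑ w ∈ A, ((if key w < key v then 0 else π w) - (if w = v then π w / 2 else 0)) := by
    intro v hv
    have e1 : meas π A - bmass π key A v = ∑ w ∈ A, (if key w < key v then 0 else π w) := by
      rw [meas, bmass, meas, Finset.sum_filter, ← Finset.sum_sub_distrib]
      exact Finset.sum_congr rfl fun w _ => by split_ifs <;> ring
    have e2 : π v / 2 = ∑ w ∈ A, (if w = v then π w / 2 else 0) := by
      rw [Finset.sum_ite_eq' A v fun w => π w / 2, if_pos hv]
    rw [Finset.sum_sub_distrib, ← e1, ← e2]
  have step1 : (∑ v ∈ A, (meas π A - bmass π key A v - π v / 2) * (π v * c v))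
      = ∑ v ∈ A, ∑ w ∈ A, f v w := by
    refine Finset.sum_congr rfl fun v hv => ?_
    rw [hd v hv, Finset.sum_mul]
  have hpair : ∀ v w : K, f v w + f w v = π v * π w * min (c v) (c w) := by
    intro v w
    simp only [hf]
    rcases lt_trichotomy (key v) (key w) with h | h | h
    · have hvw : v ≠ w := by rintro rfl; exact lt_irrefl _ h
      rw [if_neg (asymm h), if_pos h, if_neg (Ne.symm hvw), if_neg hvw,
        min_eq_left (hc v w h)]
      ring
    · have hvw : v = w := hkinj h
      subst hvw
      rw [if_neg (lt_irrefl _), if_pos rfl, min_self]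
      ring
    · have hvw : v ≠ w := by rintro rfl; exact lt_irrefl _ h
      rw [if_pos h, if_neg (asymm h), if_neg (Ne.symm hvw), if_neg hvw,
        min_eq_right (hc w v h)]
      ring
  have hswap : (∑ v ∈ A, ∑ w ∈ A, f v w) = ∑ v ∈ A, ∑ w ∈ A, f w v := Finset.sum_comm
  have hdouble : (∑ v ∈ A, ∑ w ∈ A, f v w) * 2
      = ∑ v ∈ A, ∑ w ∈ A, π v * π w * min (c v) (c w) := by
    have : (∑ v ∈ A, ∑ w ∈ A, (f v w + f w v))
        = (∑ v ∈ A, ∑ w ∈ A, f v w) + ∑ v ∈ A, ∑ w ∈ A, f w v := by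
      rw [← Finset.sum_add_distrib]
      exact Finset.sum_congr rfl fun v _ => Finset.sum_add_distrib
    have h2 : (∑ v ∈ A, ∑ w ∈ A, (f v w + f w v))
        = ∑ v ∈ A, ∑ w ∈ A, π v * π w * min (c v) (c w) :=
      Finset.sum_congr rfl fun v _ => Finset.sum_congr rfl fun w _ => hpair v w
    rw [← h2, this, ← hswap]
    try ring
  rw [step1]
  linarith [hdouble]

lemma psi_integral_le (R : K → K → ℝ) (π : K → ℝ) (A : Finset K)
    (hπ : ∀ v, 0 < π v) (hRnn : ∀ v w, 0 ≤ R v w) (hA0 : 0 < meas π A) :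
    (∫ t in (0:ℝ)..(meas π A), Psi R π A t)
      ≤ (1 / 2) * ∑ v ∈ A, ∑ w ∈ A, π v * π w * min (setProb R v Aᶜ) (setProb R w Aᶜ) := by
  classical
  set key : K → Lex (ℝ × ℕ) :=
    fun v => toLex (setProb R v Aᶜ, ((Fintype.equivFin K) v : ℕ)) with hkey
  have hkinj : Function.Injective key := by
    intro v w h
    have h2 : ((Fintype.equivFin K) v : ℕ) = ((Fintype.equivFin K) w : ℕ) :=
      congrArg (fun x : Lex (ℝ × ℕ) => (ofLex x).2) h
    exact (Fintype.equivFin K).injective (Fin.val_injective h2)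
  have hckey : ∀ v w, key v < key w → setProb R v Aᶜ ≤ setProb R w Aᶜ := by
    intro v w h
    simp only [hkey] at h
    rcases Prod.Lex.lt_iff.mp h with h' | h'
    · exact le_of_lt h'
    · exact le_of_eq h'.1
  have hc0 : ∀ v, 0 ≤ setProb R v Aᶜ := fun v => setProb_nonneg' R hRnn v Aᶜ
  have hflow0 : ∀ g : K → ℝ, (∀ v, 0 ≤ g v) → 0 ≤ fracFlow R π g Aᶜ := fun g hg =>
    Finset.sum_nonneg fun v _ => mul_nonneg (mul_nonneg (hg v) (hπ v).le) (hc0 v)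
  have hbdd : ∀ t : ℝ, BddBelow {q : ℝ | ∃ g, IsFracSub π A g t ∧ q = fracFlow R π g Aᶜ} := by
    intro t
    refine ⟨0, ?_⟩
    rintro q ⟨g, hg, rfl⟩
    exact hflow0 g fun v => (hg.1 v).1
  have hfs0 : ∀ t : ℝ, 0 ≤ t → t ≤ meas π A →
      IsFracSub π A (fun v => if v ∈ A then t / meas π A else 0) t := by
    intro t ht0 hta
    have hr0 : 0 ≤ t / meas π A := div_nonneg ht0 hA0.le
    have hr1 : t / meas π A ≤ 1 := (div_le_one hA0).mpr hta
    refine ⟨fun v => ?_, fun v hv => if_neg hv, ?_⟩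
    · dsimp only
      split_ifs
      · exact ⟨hr0, hr1⟩
      · exact ⟨le_rfl, zero_le_one⟩
    · have hzero : ∀ v ∈ Finset.univ, v ∉ A →
          (if v ∈ A then t / meas π A else 0) * π v = 0 := by
        intro v _ hv; rw [if_neg hv, zero_mul]
      show (∑ v, (if v ∈ A then t / meas π A else 0) * π v) = t
      rw [← Finset.sum_subset (Finset.subset_univ A) hzero,
        Finset.sum_congr rfl (fun v hv => by rw [if_pos hv]), ← Finset.mul_sum]
      exact div_mul_cancel₀ t hA0.ne'
  have hne : ∀ t : ℝ, 0 ≤ t → t ≤ meas π A →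
      Set.Nonempty {q : ℝ | ∃ g, IsFracSub π A g t ∧ q = fracFlow R π g Aᶜ} := by
    intro t ht0 hta
    exact ⟨_, ⟨_, hfs0 t ht0 hta, rfl⟩⟩
  have hPsiMono : MonotoneOn (Psi R π A) (Set.Icc 0 (meas π A)) := by
    rintro t₁ ⟨h10, h1a⟩ t₂ ⟨h20, h2a⟩ h12
    simp only [Psi, if_pos h1a, if_pos h2a]
    refine le_csInf (hne t₂ h20 h2a) ?_
    rintro q ⟨g, hg, rfl⟩
    rcases eq_or_lt_of_le h20 with h0 | ht2pos
    · have ht1 : t₁ = t₂ := le_antisymm h12 (h0 ▸ h10)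
      exact csInf_le (hbdd t₁) ⟨g, ht1 ▸ hg, rfl⟩
    · have hr0 : 0 ≤ t₁ / t₂ := div_nonneg h10 ht2pos.le
      have hr1 : t₁ / t₂ ≤ 1 := (div_le_one ht2pos).mpr h12
      have hgfs : IsFracSub π A (fun v => t₁ / t₂ * g v) t₁ := by
        refine ⟨fun v => ⟨mul_nonneg hr0 (hg.1 v).1, ?_⟩, fun v hv => ?_, ?_⟩
        · show t₁ / t₂ * g v ≤ 1
          calc t₁ / t₂ * g v ≤ 1 * 1 :=
            mul_le_mul hr1 (hg.1 v).2 (hg.1 v).1 zero_le_one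
          _ = 1 := by ring
        · show t₁ / t₂ * g v = 0
          rw [hg.2.1 v hv, mul_zero]
        · show (∑ v, t₁ / t₂ * g v * π v) = t₁
          have : ∀ v : K, t₁ / t₂ * g v * π v = t₁ / t₂ * (g v * π v) := fun v => by ring
          rw [Finset.sum_congr rfl fun v _ => this v, ← Finset.mul_sum, hg.2.2]
          exact div_mul_cancel₀ t₁ ht2pos.ne'
      refine (csInf_le (hbdd t₁) ⟨_, hgfs, rfl⟩).trans ?_
      have hfl : fracFlow R π (fun v => t₁ / t₂ * g v) Aᶜ = t₁ / t₂ * fracFlow R π g Aᶜ := by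
        simp only [fracFlow]
        rw [Finset.mul_sum]
        exact Finset.sum_congr rfl fun v _ => by ring
      rw [hfl]
      exact mul_le_of_le_one_left (hflow0 g fun v => (hg.1 v).1) hr1
  have hPsiG : ∀ t ∈ Set.Icc (0:ℝ) (meas π A),
      Psi R π A t ≤ fracFlow R π (greedy π key A t) Aᶜ := by
    intro t ht
    simp only [Psi, if_pos ht.2]
    exact csInf_le (hbdd t) ⟨_, greedy_isFracSub π key hπ hkinj A t ht.1 ht.2, rfl⟩
  have hgmono : ∀ v, Monotone fun t => greedy π key A t v := by
    intro v x y hxy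
    simp only [greedy]
    split_ifs
    · exact clamp_mono _ _ (hπ v) hxy
    · exact le_rfl
  have hGmono : Monotone fun t => fracFlow R π (greedy π key A t) Aᶜ := by
    intro x y hxy
    refine Finset.sum_le_sum fun v _ => ?_
    exact mul_le_mul_of_nonneg_right
      (mul_le_mul_of_nonneg_right (hgmono v hxy) (hπ v).le) (hc0 v)
  have hmain : (∫ t in (0:ℝ)..meas π A, Psi R π A t)
      ≤ ∫ t in (0:ℝ)..meas π A, fracFlow R π (greedy π key A t) Aᶜ := by
    refine intervalIntegral.integral_mono_on hA0.le ?_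
      ((hGmono.monotoneOn _).intervalIntegrable) hPsiG
    have huIcc : Set.uIcc (0:ℝ) (meas π A) = Set.Icc 0 (meas π A) := Set.uIcc_of_le hA0.le
    exact (huIcc ▸ hPsiMono : MonotoneOn _ (Set.uIcc (0:ℝ) (meas π A))).intervalIntegrable
  have hbpa : ∀ v ∈ A, bmass π key A v + π v ≤ meas π A := by
    intro v hv
    have haux : ∀ s : Finset K, s ⊆ A → v ∉ s → meas π s + π v ≤ meas π A := by
      intro s hsub hvs
      have h1 : meas π s + π v = meas π (insert v s) := by
        rw [meas, meas, Finset.sum_insert hvs]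
        exact add_comm _ _
      rw [h1]
      exact meas_mono' π hπ (Finset.insert_subset hv hsub)
    simp only [bmass]
    apply haux
    · intro x hx
      simp only [Finset.mem_filter] at hx
      exact hx.1
    · simp
  have hGval : (∫ t in (0:ℝ)..meas π A, fracFlow R π (greedy π key A t) Aᶜ)
      = ∑ v ∈ A, (meas π A - bmass π key A v - π v / 2) * (π v * setProb R v Aᶜ) := by
    have hEq : Set.EqOn (fun t : ℝ => fracFlow R π (greedy π key A t) Aᶜ)
        (fun t : ℝ => ∑ v, greedy π key A t v * (π v * setProb R v Aᶜ))
        (Set.uIcc 0 (meas π A)) := by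
      intro t _
      simp only [fracFlow]
      exact Finset.sum_congr rfl fun v _ => by rw [mul_assoc]
    rw [intervalIntegral.integral_congr hEq,
      intervalIntegral.integral_finset_sum (fun v _ =>
        (((hgmono v).mul_const (mul_nonneg (hπ v).le (hc0 v))).monotoneOn _).intervalIntegrable)]
    have hzero : ∀ v ∈ Finset.univ, v ∉ A →
        (∫ t in (0:ℝ)..meas π A, greedy π key A t v * (π v * setProb R v Aᶜ)) = 0 := by
      intro v _ hv
      have hz : Set.EqOn (fun t : ℝ => greedy π key A t v * (π v * setProb R v Aᶜ))
          (fun _ => (0:ℝ)) (Set.uIcc 0 (meas π A)) := by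
        intro t _
        simp only [greedy, if_neg hv, zero_mul]
      rw [intervalIntegral.integral_congr hz, intervalIntegral.integral_zero]
    rw [← Finset.sum_subset (Finset.subset_univ A) hzero]
    refine Finset.sum_congr rfl fun v hv => ?_
    rw [intervalIntegral.integral_mul_const]
    have hz : Set.EqOn (fun t : ℝ => greedy π key A t v)
        (fun t => min 1 (max 0 ((t - bmass π key A v) / π v))) (Set.uIcc 0 (meas π A)) := by
      intro t _
      simp only [greedy, if_pos hv]
    have hb0 : (0:ℝ) ≤ bmass π key A v := meas_nonneg' π hπ _
    rw [intervalIntegral.integral_congr hz,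
      integral_clamp _ _ _ hb0 (hπ v) (hbpa v hv)]
  calc (∫ t in (0:ℝ)..meas π A, Psi R π A t)
      ≤ ∫ t in (0:ℝ)..meas π A, fracFlow R π (greedy π key A t) Aᶜ := hmain
    _ = ∑ v ∈ A, (meas π A - bmass π key A v - π v / 2) * (π v * setProb R v Aᶜ) := hGval
    _ = (1 / 2) * ∑ v ∈ A, ∑ w ∈ A, π v * π w * min (setProb R v Aᶜ) (setProb R w Aᶜ) :=
      sum_pair_algebra π (fun v => setProb R v Aᶜ) key hkinj hckey A


lemma evo_ge (R : K → K → ℝ) (π : K → ℝ) (A : Finset K)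
    (hπ : ∀ v, 0 < π v) (hRnn : ∀ v w, 0 ≤ R v w) (hrow : ∀ v, ∑ w, R v w = 1)
    (hlaz : ∀ v, (1:ℝ)/2 ≤ R v v) (hA0 : 0 < meas π A)
    (hQ : ∑ y, π y * setProb R y A = meas π A) :
    (∑ v ∈ A, ∑ w ∈ A, π v * π w * min (setProb R v Aᶜ) (setProb R w Aᶜ))
        / (8 * (meas π A) ^ 2) ≤ psiEvo R π A := by
  classical
  have hXanti : Antitone fun u : ℝ => meas π (levelSet R A u) := by
    intro x y hxy
    refine meas_mono' π hπ ?_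
    intro z hz
    simp only [levelSet, Finset.mem_filter] at hz ⊢
    exact ⟨hz.1, lt_of_le_of_lt hxy hz.2⟩
  have hX0 : ∀ u : ℝ, 0 ≤ meas π (levelSet R A u) := fun u => meas_nonneg' π hπ _
  have hφanti : Antitone fun u : ℝ => Real.sqrt (meas π (levelSet R A u) / meas π A) := by
    intro x y hxy
    exact Real.sqrt_le_sqrt ((div_le_div_iff_of_pos_right hA0).mpr (hXanti hxy))
  have hsv : ∀ v ∈ A, (1:ℝ)/2 ≤ setProb R v A := by
    intro v hv
    have h2 : R v v ≤ setProb R v A := Finset.single_le_sum (fun x _ => hRnn v x) hv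
    linarith [hlaz v]
  have hsle1 : ∀ v, setProb R v A ≤ 1 := fun v => setProb_le_one' R hRnn hrow v A
  have hprob_out : ∀ y, y ∉ A → setProb R y A ≤ 1/2 := by
    intro y hy
    have h1 := setProb_compl' R hrow y A
    have h2 : R y y ≤ setProb R y Aᶜ :=
      Finset.single_le_sum (fun x _ => hRnn y x) (Finset.mem_compl.mpr hy)
    linarith [hlaz y]
  have hlev : ∀ u : ℝ, 1/2 ≤ u → levelSet R A u = A.filter fun v => u < setProb R v A := by
    intro u hu
    ext y
    simp only [levelSet, Finset.mem_filter, Finset.mem_univ, true_and]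
    constructor
    · intro h
      refine ⟨?_, h⟩
      by_contra hy
      exact absurd h (not_lt.mpr ((hprob_out y hy).trans hu))
    · exact fun h => h.2
  have hXY : ∀ u : ℝ, 1/2 ≤ u →
      meas π (levelSet R A u) + meas π (A.filter fun v => setProb R v A ≤ u) = meas π A := by
    intro u hu
    rw [hlev u hu, meas, meas, meas, Finset.sum_filter, Finset.sum_filter,
      ← Finset.sum_add_distrib]
    refine Finset.sum_congr rfl fun v _ => ?_
    rcases le_or_gt (setProb R v A) u with h | h
    · rw [if_neg (not_lt.mpr h), if_pos h, zero_add]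
    · rw [if_pos h, if_neg (not_le.mpr h), add_zero]
  have hYmono : Monotone fun u : ℝ => meas π (A.filter fun v => setProb R v A ≤ u) := by
    intro x y hxy
    refine meas_mono' π hπ ?_
    intro z hz
    simp only [Finset.mem_filter] at hz ⊢
    exact ⟨hz.1, hz.2.trans hxy⟩
  have hY0 : ∀ u : ℝ, 0 ≤ meas π (A.filter fun v => setProb R v A ≤ u) :=
    fun u => meas_nonneg' π hπ _
  have hXif : Set.EqOn (fun u : ℝ => meas π (levelSet R A u))
      (fun u => ∑ y, if u < setProb R y A then π y else 0) (Set.uIcc 0 1) := by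
    intro u _
    simp only [levelSet, meas, Finset.sum_filter]
  have hI1 : (∫ u in (0:ℝ)..1, meas π (levelSet R A u)) = meas π A := by
    rw [intervalIntegral.integral_congr hXif,
      intervalIntegral.integral_finset_sum (fun y _ =>
        ((antitone_if_lt (π y) _ (hπ y).le).antitoneOn _).intervalIntegrable)]
    have hterm : ∀ y : K, (∫ u in (0:ℝ)..1, if u < setProb R y A then π y else 0)
        = π y * setProb R y A := by
      intro y
      rw [integral_if_lt (π y) _ 0 1 (hπ y).le (setProb_nonneg' R hRnn y A) (hsle1 y), sub_zero]
    rw [Finset.sum_congr rfl fun y _ => hterm y]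
    exact hQ
  have hYsq : ∀ u : ℝ, (meas π (A.filter fun v => setProb R v A ≤ u)) ^ 2
      = ∑ v ∈ A, ∑ w ∈ A,
          (if max (setProb R v A) (setProb R w A) ≤ u then π v * π w else 0) := by
    intro u
    rw [meas, Finset.sum_filter, sq, Finset.sum_mul_sum]
    refine Finset.sum_congr rfl fun v _ => Finset.sum_congr rfl fun w _ => ?_
    by_cases h1 : setProb R v A ≤ u <;> by_cases h2 : setProb R w A ≤ u <;>
      simp [h1, h2, max_le_iff]
  have hJ : (∫ u in (1/2:ℝ)..1, (meas π (A.filter fun v => setProb R v A ≤ u)) ^ 2)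
      = ∑ v ∈ A, ∑ w ∈ A, π v * π w * min (setProb R v Aᶜ) (setProb R w Aᶜ) := by
    have hEq : Set.EqOn (fun u : ℝ => (meas π (A.filter fun v => setProb R v A ≤ u)) ^ 2)
        (fun u => ∑ v ∈ A, ∑ w ∈ A,
          (if max (setProb R v A) (setProb R w A) ≤ u then π v * π w else 0))
        (Set.uIcc (1/2) 1) := fun u _ => hYsq u
    have hint1 : ∀ v ∈ A, IntervalIntegrable (fun u : ℝ => ∑ w ∈ A,
        (if max (setProb R v A) (setProb R w A) ≤ u then π v * π w else 0))
        volume (1/2) 1 := by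
      intro v _
      have hm : Monotone fun u : ℝ => ∑ w ∈ A,
          (if max (setProb R v A) (setProb R w A) ≤ u then π v * π w else 0) := by
        intro x y hxy
        exact Finset.sum_le_sum fun w _ =>
          monotone_if_le _ _ (mul_nonneg (hπ v).le (hπ w).le) hxy
      exact (hm.monotoneOn _).intervalIntegrable
    rw [intervalIntegral.integral_congr hEq, intervalIntegral.integral_finset_sum hint1]
    refine Finset.sum_congr rfl fun v hv => ?_
    rw [intervalIntegral.integral_finset_sum (fun w _ =>
      ((monotone_if_le _ _ (mul_nonneg (hπ v).le (hπ w).le)).monotoneOn _).intervalIntegrable)]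
    refine Finset.sum_congr rfl fun w hw => ?_
    have hmax1 : (1:ℝ)/2 ≤ max (setProb R v A) (setProb R w A) :=
      le_trans (hsv v hv) (le_max_left _ _)
    have hmax2 : max (setProb R v A) (setProb R w A) ≤ 1 := max_le (hsle1 v) (hsle1 w)
    rw [integral_if_le _ _ _ _ (mul_nonneg (hπ v).le (hπ w).le) hmax1 hmax2]
    have h1 := setProb_compl' R hrow v A
    have h2 := setProb_compl' R hrow w A
    rcases le_total (setProb R v Aᶜ) (setProb R w Aᶜ) with h | h
    · have h3 : (1:ℝ) - max (setProb R v A) (setProb R w A) = setProb R v Aᶜ := by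
        rw [max_eq_left (by linarith)]; linarith
      rw [h3, min_eq_left h]
    · have h3 : (1:ℝ) - max (setProb R v A) (setProb R w A) = setProb R w Aᶜ := by
        rw [max_eq_right (by linarith)]; linarith
      rw [h3, min_eq_right h]
  -- final chain
  simp only [psiEvo]
  have hφint : ∀ γ δ : ℝ, IntervalIntegrable
      (fun u : ℝ => Real.sqrt (meas π (levelSet R A u) / meas π A)) volume γ δ :=
    fun γ δ => (hφanti.antitoneOn _).intervalIntegrable
  have hβanti : Antitone fun u : ℝ => (1 + meas π (levelSet R A u) / meas π A) / 2 := by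
    intro x y hxy
    have h2 : meas π (levelSet R A y) / meas π A ≤ meas π (levelSet R A x) / meas π A :=
      (div_le_div_iff_of_pos_right hA0).mpr (hXanti hxy)
    linarith
  have hβint : ∀ γ δ : ℝ, IntervalIntegrable
      (fun u : ℝ => (1 + meas π (levelSet R A u) / meas π A) / 2) volume γ δ :=
    fun γ δ => (hβanti.antitoneOn _).intervalIntegrable
  have hY2mono : Monotone fun u : ℝ =>
      (meas π (A.filter fun v => setProb R v A ≤ u)) ^ 2 * (1 / (8 * meas π A ^ 2)) := by
    intro x y hxy
    have hnn : (0:ℝ) ≤ 1 / (8 * meas π A ^ 2) := by positivity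
    exact mul_le_mul_of_nonneg_right (pow_le_pow_left₀ (hY0 x) (hYmono hxy) 2) hnn
  have hb1 : (∫ u in (0:ℝ)..(1/2), Real.sqrt (meas π (levelSet R A u) / meas π A))
      ≤ ∫ u in (0:ℝ)..(1/2), (1 + meas π (levelSet R A u) / meas π A) / 2 := by
    refine intervalIntegral.integral_mono_on (by norm_num) (hφint _ _) (hβint _ _) ?_
    intro u _
    exact sqrt_le_half _ (div_nonneg (hX0 u) hA0.le)
  have hb2 : (∫ u in (1/2:ℝ)..1, Real.sqrt (meas π (levelSet R A u) / meas π A))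
      ≤ ∫ u in (1/2:ℝ)..1, ((1 + meas π (levelSet R A u) / meas π A) / 2
          - (meas π (A.filter fun v => setProb R v A ≤ u)) ^ 2 * (1 / (8 * meas π A ^ 2))) := by
    refine intervalIntegral.integral_mono_on (by norm_num) (hφint _ _)
      ((hβint _ _).sub ((hY2mono.monotoneOn _).intervalIntegrable)) ?_
    intro u hu
    have hXle : meas π (levelSet R A u) ≤ meas π A := by
      have h1 := hXY u hu.1
      have h2 := hY0 u
      linarith
    have hz0 : 0 ≤ meas π (levelSet R A u) / meas π A := div_nonneg (hX0 u) hA0.le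
    have hz1 : meas π (levelSet R A u) / meas π A ≤ 1 := (div_le_one hA0).mpr hXle
    have hs := sqrt_le_better _ hz0 hz1
    have h1z : 1 - meas π (levelSet R A u) / meas π A
        = meas π (A.filter fun v => setProb R v A ≤ u) / meas π A := by
      rw [eq_div_iff hA0.ne', sub_mul, one_mul, div_mul_cancel₀ _ hA0.ne']
      linarith [hXY u hu.1]
    calc Real.sqrt (meas π (levelSet R A u) / meas π A)
        ≤ (1 + meas π (levelSet R A u) / meas π A) / 2
          - (1 - meas π (levelSet R A u) / meas π A) ^ 2 / 8 := hs
      _ = (1 + meas π (levelSet R A u) / meas π A) / 2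
          - (meas π (A.filter fun v => setProb R v A ≤ u)) ^ 2 * (1 / (8 * meas π A ^ 2)) := by
          rw [h1z, div_pow]
          field_simp
  have hbsum : (∫ u in (0:ℝ)..(1/2), (1 + meas π (levelSet R A u) / meas π A) / 2)
      + (∫ u in (1/2:ℝ)..1, (1 + meas π (levelSet R A u) / meas π A) / 2) = 1 := by
    rw [intervalIntegral.integral_add_adjacent_intervals (hβint _ _) (hβint _ _)]
    have hEq : Set.EqOn (fun u : ℝ => (1 + meas π (levelSet R A u) / meas π A) / 2)
        (fun u : ℝ => 1/2 + meas π (levelSet R A u) * (1 / (2 * meas π A)))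
        (Set.uIcc 0 1) := by
      intro u _
      dsimp only
      rw [add_div, div_div, mul_one_div, mul_comm (meas π A) 2]
    have hXcint : IntervalIntegrable
        (fun u : ℝ => meas π (levelSet R A u) * (1 / (2 * meas π A))) volume 0 1 := by
      have : Antitone fun u : ℝ => meas π (levelSet R A u) * (1 / (2 * meas π A)) := by
        intro x y hxy
        exact mul_le_mul_of_nonneg_right (hXanti hxy) (by positivity)
      exact (this.antitoneOn _).intervalIntegrable
    rw [intervalIntegral.integral_congr hEq,
      intervalIntegral.integral_add intervalIntegrable_const hXcint,
      intervalIntegral.integral_const, intervalIntegral.integral_mul_const, hI1, smul_eq_mul]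
    field_simp
    ring
  have hsplitφ : (∫ u in (0:ℝ)..1, Real.sqrt (meas π (levelSet R A u) / meas π A))
      = (∫ u in (0:ℝ)..(1/2), Real.sqrt (meas π (levelSet R A u) / meas π A))
      + ∫ u in (1/2:ℝ)..1, Real.sqrt (meas π (levelSet R A u) / meas π A) :=
    (intervalIntegral.integral_add_adjacent_intervals (hφint _ _) (hφint _ _)).symm
  have hsub : (∫ u in (1/2:ℝ)..1, ((1 + meas π (levelSet R A u) / meas π A) / 2
        - (meas π (A.filter fun v => setProb R v A ≤ u)) ^ 2 * (1 / (8 * meas π A ^ 2))))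
      = (∫ u in (1/2:ℝ)..1, (1 + meas π (levelSet R A u) / meas π A) / 2)
        - (∫ u in (1/2:ℝ)..1, (meas π (A.filter fun v => setProb R v A ≤ u)) ^ 2)
            * (1 / (8 * meas π A ^ 2)) := by
    rw [intervalIntegral.integral_sub (hβint _ _) ((hY2mono.monotoneOn _).intervalIntegrable),
      intervalIntegral.integral_mul_const]
  have hfinal : (∫ u in (0:ℝ)..1, Real.sqrt (meas π (levelSet R A u) / meas π A))
      ≤ 1 - (∑ v ∈ A, ∑ w ∈ A, π v * π w * min (setProb R v Aᶜ) (setProb R w Aᶜ))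
          * (1 / (8 * meas π A ^ 2)) := by
    have hb2' := hb2
    rw [hsub, hJ] at hb2'
    rw [hsplitφ]
    linarith [hb1, hb2', hbsum]
  have hTform : (∑ v ∈ A, ∑ w ∈ A, π v * π w * min (setProb R v Aᶜ) (setProb R w Aᶜ))
      / (8 * meas π A ^ 2)
      = (∑ v ∈ A, ∑ w ∈ A, π v * π w * min (setProb R v Aᶜ) (setProb R w Aᶜ))
        * (1 / (8 * meas π A ^ 2)) := by ring
  rw [hTform]
  linarith [hfinal]


end ProofAux

/-- for a lazy, irreducible, aperiodic chain and `0 < π(A) ≤ 1/2`,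
`ψ_evo(A) ≥ (1/4)·ψ̄⁺(A)`. -/
theorem evolving_ge_quarter_spread
    (P : K → K → ℝ) (π : K → ℝ) (A : Finset K)
    (hM : IsMarkov P π) (hlazy : IsLazy P)
    (hirr : MCIrreducible P) (hap : MCAperiodic P)
    (hA0 : 0 < meas π A) (hA : meas π A ≤ 1 / 2) :
    psiEvo (rev P π) π A ≥ (1 / 4) * psiPlus (rev P π) π A := by
  classical
  have hπ := hM.piPos
  have hRnn : ∀ v w, 0 ≤ rev P π v w := fun v w =>
    div_nonneg (mul_nonneg (hπ w).le (hM.nonneg w v)) (hπ v).le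
  have hrow : ∀ v, ∑ w, rev P π v w = 1 := by
    intro v
    simp only [rev]
    rw [← Finset.sum_div, hM.stationary v, div_self (hπ v).ne']
  have hlaz : ∀ v, (1:ℝ)/2 ≤ rev P π v v := by
    intro v
    have h : rev P π v v = P v v := by
      simp only [rev]
      rw [mul_comm, mul_div_assoc, div_self (hπ v).ne', mul_one]
    rw [h]
    exact hlazy v
  have hQ : ∑ y, π y * setProb (rev P π) y A = meas π A := by
    have h1 : ∀ y, π y * setProb (rev P π) y A = ∑ w ∈ A, π w * P w y := by
      intro y
      rw [setProb, Finset.mul_sum]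
      refine Finset.sum_congr rfl fun w _ => ?_
      simp only [rev]
      rw [mul_comm (π y) _, div_mul_cancel₀ _ (hπ y).ne']
    rw [Finset.sum_congr rfl fun y _ => h1 y, Finset.sum_comm, meas]
    refine Finset.sum_congr rfl fun w _ => ?_
    rw [← Finset.mul_sum, hM.rowSum w, mul_one]
  have hEvo := evo_ge (rev P π) π A hπ hRnn hrow hlaz hA0 hQ
  have hPsi := psi_integral_le (rev P π) π A hπ hRnn hA0
  rw [ge_iff_le]
  simp only [psiPlus]
  have ha2 : (0:ℝ) < (meas π A) ^ 2 := pow_pos hA0 2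
  have h2 : (∫ t in (0:ℝ)..meas π A, Psi (rev P π) π A t) / (meas π A) ^ 2
      ≤ (1 / 2 * ∑ v ∈ A, ∑ w ∈ A,
          π v * π w * min (setProb (rev P π) v Aᶜ) (setProb (rev P π) w Aᶜ)) / (meas π A) ^ 2 :=
    (div_le_div_iff_of_pos_right ha2).mpr hPsi
  calc 1 / 4 * ((∫ t in (0:ℝ)..meas π A, Psi (rev P π) π A t) / (meas π A) ^ 2)
      ≤ 1 / 4 * ((1 / 2 * ∑ v ∈ A, ∑ w ∈ A,
          π v * π w * min (setProb (rev P π) v Aᶜ) (setProb (rev P π) w Aᶜ)) / (meas π A) ^ 2) := by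
        linarith [h2]
    _ = (∑ v ∈ A, ∑ w ∈ A, π v * π w * min (setProb (rev P π) v Aᶜ) (setProb (rev P π) w Aᶜ))
          / (8 * (meas π A) ^ 2) := by ring
    _ ≤ psiEvo (rev P π) π A := hEvo
end
end

section
/- Let P be a lazy, irreducible, aperiodic Markov chain on a finite state space K with stationary distribution π, and let A ⊆ K with 0 < π(A) ≤ 1/2. Then ψ_evo(A) ≤ (1/2)·ψ̄_mod(A). -/
open Finset MeasureTheory

noncomputable section

attribute [local instance] Classical.propDecidable

variable {K : Type*} [Fintype K]

section Aux

variable {P : K → K → ℝ} {π : K → ℝ} {A : Finset K}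

lemma rev_nonneg (h : IsMarkov P π) (u v : K) : 0 ≤ rev P π u v :=
  div_nonneg (mul_nonneg (h.piPos v).le (h.nonneg v u)) (h.piPos u).le

lemma rev_rowSum (h : IsMarkov P π) (u : K) : ∑ v, rev P π u v = 1 := by
  unfold rev
  rw [← Finset.sum_div, h.stationary u, div_self (h.piPos u).ne']

lemma setProb_nonneg (h : IsMarkov P π) (v : K) (C : Finset K) :
    0 ≤ setProb (rev P π) v C :=
  Finset.sum_nonneg fun c _ => rev_nonneg h v c

lemma setProb_le_one (h : IsMarkov P π) (v : K) (C : Finset K) :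
    setProb (rev P π) v C ≤ 1 := by
  rw [← rev_rowSum h v]
  exact Finset.sum_le_sum_of_subset_of_nonneg (Finset.subset_univ C)
    (fun c _ _ => rev_nonneg h v c)

lemma setProb_compl (h : IsMarkov P π) (v : K) (C : Finset K) :
    setProb (rev P π) v Cᶜ = 1 - setProb (rev P π) v C := by
  have := Finset.sum_add_sum_compl C (fun c => rev P π v c)
  unfold setProb
  rw [← rev_rowSum h v] at *
  linarith [this]

lemma sum_pi_setProb (h : IsMarkov P π) (A : Finset K) :
    ∑ y, π y * setProb (rev P π) y A = meas π A := by
  unfold setProb meas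
  have key : ∀ y, π y * ∑ c ∈ A, rev P π y c = ∑ c ∈ A, π c * P c y := by
    intro y
    rw [Finset.mul_sum]
    refine Finset.sum_congr rfl fun a _ => ?_
    unfold rev
    field_simp [(h.piPos y).ne']
  simp_rw [key]
  rw [Finset.sum_comm]
  refine Finset.sum_congr rfl fun a _ => ?_
  rw [← Finset.mul_sum, h.rowSum, mul_one]

lemma meas_compl (h : IsMarkov P π) (A : Finset K) : meas π Aᶜ = 1 - meas π A := by
  unfold meas
  have := Finset.sum_add_sum_compl A (fun v => π v)
  rw [h.piSum] at this
  linarith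

lemma meas_nonneg (h : IsMarkov P π) (A : Finset K) : 0 ≤ meas π A :=
  Finset.sum_nonneg fun v _ => (h.piPos v).le

lemma meas_le_one (h : IsMarkov P π) (A : Finset K) : meas π A ≤ 1 := by
  have := meas_nonneg h Aᶜ
  have := meas_compl h A
  linarith

open MeasureTheory in
lemma integrableOn_unit {f : ℝ → ℝ} (hf : Measurable f) (C : ℝ) (h : ∀ x, |f x| ≤ C) :
    IntegrableOn f (Set.Ioc (0:ℝ) 1) volume := by
  refine Integrable.mono' (g := fun _ => C) ?_ hf.aestronglyMeasurable (Filter.Eventually.of_forall h)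
  have : IntegrableOn (fun _ => C) (Set.Ioc (0:ℝ) 1) volume :=
    integrableOn_const (by simp [Real.volume_Ioc])
  exact this

open MeasureTheory in
lemma integral_if_lt_s1 (a c : ℝ) (hc0 : 0 ≤ c) (hc1 : c ≤ 1) :
    ∫ u in Set.Ioc (0:ℝ) 1, (if u < c then a else 0) = a * c := by
  have : (fun u => if u < c then a else 0) = (Set.Iio c).indicator (fun _ => a) := by
    funext u
    simp [Set.indicator_apply]
  rw [this, setIntegral_indicator measurableSet_Iio]
  have hset : Set.Ioc (0:ℝ) 1 ∩ Set.Iio c = Set.Ioo 0 c := by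
    ext x
    constructor
    · rintro ⟨⟨h1, h2⟩, h3⟩; exact ⟨h1, h3⟩
    · rintro ⟨h1, h2⟩; exact ⟨⟨h1, le_trans h2.le hc1⟩, h2⟩
  rw [hset]
  simp [Real.volume_Ioo, ENNReal.toReal_ofReal hc0, mul_comm, hc0]

lemma measF_eq (R : K → K → ℝ) (u : ℝ) :
    meas π (levelSet R A u) = ∑ y, if u < setProb R y A then π y else 0 := by
  unfold meas levelSet
  rw [Finset.sum_filter]

lemma measF_measurable (R : K → K → ℝ) :
    Measurable fun u => meas π (levelSet R A u) := by
  simp_rw [measF_eq]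
  refine Finset.univ.measurable_sum fun y _ => ?_
  exact Measurable.ite measurableSet_Iio measurable_const measurable_const

lemma measF_nonneg (h : IsMarkov P π) (R : K → K → ℝ) (u : ℝ) :
    0 ≤ meas π (levelSet R A u) :=
  meas_nonneg h _

lemma measF_le_one (h : IsMarkov P π) (R : K → K → ℝ) (u : ℝ) :
    meas π (levelSet R A u) ≤ 1 :=
  meas_le_one h _

open MeasureTheory in
lemma integrableOn_measF (R : K → K → ℝ) :
    IntegrableOn (fun u => meas π (levelSet R A u)) (Set.Ioc (0:ℝ) 1) volume := by
  refine integrableOn_unit (measF_measurable R) (∑ y, |π y|) fun x => ?_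
  rw [measF_eq]
  refine le_trans (Finset.abs_sum_le_sum_abs _ _) (Finset.sum_le_sum fun y _ => ?_)
  split <;> simp [abs_nonneg]

open MeasureTheory in
lemma integral_measF (h : IsMarkov P π) :
    ∫ u in Set.Ioc (0:ℝ) 1, meas π (levelSet (rev P π) A u) = meas π A := by
  simp_rw [measF_eq]
  rw [integral_finset_sum]
  · rw [← sum_pi_setProb h A]
    refine Finset.sum_congr rfl fun y _ => ?_
    exact integral_if_lt_s1 (π y) _ (setProb_nonneg h y A) (setProb_le_one h y A)
  · intro y _
    refine integrableOn_unit ?_ |π y| fun x => ?_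
    · exact Measurable.ite measurableSet_Iio measurable_const measurable_const
    · split <;> simp [abs_nonneg]

lemma fracsub_A (h : IsMarkov P π) (hA0 : 0 < meas π A) {t : ℝ} (ht0 : 0 ≤ t)
    (htM : t ≤ meas π A) :
    IsFracSub π A (fun v => if v ∈ A then t / meas π A else 0) t := by
  refine ⟨fun v => ?_, fun v hv => by simp [hv], ?_⟩
  · dsimp only
    split
    · exact ⟨div_nonneg ht0 hA0.le, (div_le_one hA0).2 htM⟩
    · norm_num
  · have : ∀ v, (if v ∈ A then t / meas π A else 0) * π v
        = if v ∈ A then (t / meas π A) * π v else 0 := by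
      intro v; split <;> simp
    simp_rw [this]
    rw [Finset.sum_ite_mem, Finset.univ_inter, ← Finset.mul_sum]
    exact div_mul_cancel₀ t hA0.ne'

lemma fracsub_compl (h : IsMarkov P π) (hA1 : meas π A < 1) {s : ℝ} (hs0 : 0 ≤ s)
    (hsM : s ≤ 1 - meas π A) :
    IsFracSub π Aᶜ (fun v => if v ∈ Aᶜ then s / (1 - meas π A) else 0) s := by
  have hc : meas π Aᶜ = 1 - meas π A := meas_compl h A
  have hcpos : 0 < meas π Aᶜ := by rw [hc]; linarith
  refine ⟨fun v => ?_, fun v hv => by simp [hv], ?_⟩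
  · dsimp only
    split
    · constructor
      · exact div_nonneg hs0 (by linarith)
      · rw [div_le_one (by linarith)]; exact hsM
    · norm_num
  · have : ∀ v, (if v ∈ Aᶜ then s / (1 - meas π A) else 0) * π v
        = if v ∈ Aᶜ then (s / (1 - meas π A)) * π v else 0 := by
      intro v; split <;> simp
    simp_rw [this]
    rw [Finset.sum_ite_mem, Finset.univ_inter]
    have : ∑ v ∈ Aᶜ, π v = 1 - meas π A := hc
    rw [← Finset.mul_sum, this]
    exact div_mul_cancel₀ s (by linarith)

lemma fracFlow_nonneg (h : IsMarkov P π) {g : K → ℝ} (hg : ∀ v, 0 ≤ g v) (C : Finset K) :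
    0 ≤ fracFlow (rev P π) π g C :=
  Finset.sum_nonneg fun v _ => mul_nonneg (mul_nonneg (hg v) (h.piPos v).le)
    (setProb_nonneg h v C)

lemma fracFlow_le_mass (h : IsMarkov P π) {g : K → ℝ} {S : Finset K} {t : ℝ}
    (hg : IsFracSub π S g t) (C : Finset K) :
    fracFlow (rev P π) π g C ≤ t := by
  rw [← hg.2.2]
  refine Finset.sum_le_sum fun v _ => ?_
  have h1 : 0 ≤ g v * π v := mul_nonneg (hg.1 v).1 (h.piPos v).le
  calc g v * π v * setProb (rev P π) v C ≤ g v * π v * 1 :=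
        mul_le_mul_of_nonneg_left (setProb_le_one h v C) h1
    _ = g v * π v := mul_one _

lemma fracFlow_eq_sub (h : IsMarkov P π) {g : K → ℝ} {t : ℝ} (hg : IsFracSub π A g t) :
    fracFlow (rev P π) π g Aᶜ = t - ∑ v, g v * π v * setProb (rev P π) v A := by
  unfold fracFlow
  simp_rw [setProb_compl h, mul_sub, mul_one]
  rw [Finset.sum_sub_distrib, hg.2.2]

open MeasureTheory in
lemma sum_gc_eq_integral (h : IsMarkov P π) {g : K → ℝ}
    (hg : ∀ v, 0 ≤ g v ∧ g v ≤ 1) :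
    ∑ v, g v * π v * setProb (rev P π) v A
      = ∫ u in Set.Ioc (0:ℝ) 1, ∑ v, (if u < setProb (rev P π) v A then g v * π v else 0) := by
  rw [integral_finset_sum]
  · refine Finset.sum_congr rfl fun v _ => ?_
    rw [integral_if_lt_s1 _ _ (setProb_nonneg h v A) (setProb_le_one h v A)]
  · intro v _
    refine integrableOn_unit ?_ |g v * π v| fun x => ?_
    · exact Measurable.ite measurableSet_Iio measurable_const measurable_const
    · split <;> simp [abs_nonneg] <;> positivity

open MeasureTheory in
lemma integrable_Sg {g : K → ℝ} (R : K → K → ℝ) :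
    IntegrableOn (fun u => ∑ v, (if u < setProb R v A then g v * π v else 0))
      (Set.Ioc (0:ℝ) 1) volume := by
  refine integrableOn_unit ?_ (∑ v, |g v * π v|) fun x => ?_
  · refine Finset.univ.measurable_sum fun v _ => ?_
    exact Measurable.ite measurableSet_Iio measurable_const measurable_const
  · refine le_trans (Finset.abs_sum_le_sum_abs _ _) (Finset.sum_le_sum fun v _ => ?_)
    split <;> simp [abs_nonneg] <;> positivity

lemma Sg_le (h : IsMarkov P π) {g : K → ℝ} {t : ℝ} (hg : IsFracSub π A g t) (u : ℝ) :
    ∑ v, (if u < setProb (rev P π) v A then g v * π v else 0)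
      ≤ min t (meas π (levelSet (rev P π) A u)) := by
  refine le_min ?_ ?_
  · rw [← hg.2.2]
    refine Finset.sum_le_sum fun v _ => ?_
    split
    · exact le_refl _
    · exact mul_nonneg (hg.1 v).1 (h.piPos v).le
  · rw [measF_eq]
    refine Finset.sum_le_sum fun v _ => ?_
    split
    · calc g v * π v ≤ 1 * π v :=
          mul_le_mul_of_nonneg_right (hg.1 v).2 (h.piPos v).le
        _ = π v := one_mul _
    · exact le_refl _

lemma Sg_ge (h : IsMarkov P π) {g : K → ℝ} {s : ℝ} (hg : IsFracSub π Aᶜ g s) (u : ℝ) :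
    meas π (levelSet (rev P π) A u) - (1 - s)
      ≤ ∑ v, (if u < setProb (rev P π) v A then g v * π v else 0) := by
  have key : meas π (levelSet (rev P π) A u)
      - ∑ v, (if u < setProb (rev P π) v A then g v * π v else 0)
      = ∑ v, (if u < setProb (rev P π) v A then (1 - g v) * π v else 0) := by
    rw [measF_eq, ← Finset.sum_sub_distrib]
    refine Finset.sum_congr rfl fun v _ => ?_
    split <;> ring
  have hsplit : ∑ v, (if u < setProb (rev P π) v A then (1 - g v) * π v else 0)
      = (∑ v ∈ A, (if u < setProb (rev P π) v A then (1 - g v) * π v else 0))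
        + ∑ v ∈ Aᶜ, (if u < setProb (rev P π) v A then (1 - g v) * π v else 0) :=
    (Finset.sum_add_sum_compl A _).symm
  have hb1 : ∑ v ∈ A, (if u < setProb (rev P π) v A then (1 - g v) * π v else 0)
      ≤ meas π A := by
    refine Finset.sum_le_sum fun v _ => ?_
    split
    · calc (1 - g v) * π v ≤ 1 * π v :=
          mul_le_mul_of_nonneg_right (by linarith [(hg.1 v).1]) (h.piPos v).le
        _ = π v := one_mul _
    · exact (h.piPos v).le
  have hb2 : ∑ v ∈ Aᶜ, (if u < setProb (rev P π) v A then (1 - g v) * π v else 0)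
      ≤ ∑ v ∈ Aᶜ, (1 - g v) * π v := by
    refine Finset.sum_le_sum fun v _ => ?_
    split
    · exact le_refl _
    · exact mul_nonneg (by linarith [(hg.1 v).2]) (h.piPos v).le
  have hAc : ∑ v ∈ Aᶜ, g v * π v = s := by
    rw [← hg.2.2]
    refine (Finset.sum_subset (Finset.subset_univ Aᶜ) fun v _ hv => ?_)
    rw [hg.2.1 v (by simpa using hv), zero_mul]
  have hb3 : ∑ v ∈ Aᶜ, (1 - g v) * π v = (1 - meas π A) - s := by
    have : ∑ v ∈ Aᶜ, (1 - g v) * π v = (∑ v ∈ Aᶜ, π v) - ∑ v ∈ Aᶜ, g v * π v := by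
      rw [← Finset.sum_sub_distrib]
      exact Finset.sum_congr rfl fun v _ => by ring
    have hm : (∑ v ∈ Aᶜ, π v) = meas π Aᶜ := rfl
    rw [this, hAc, hm, meas_compl h A]
  linarith [key, hsplit, hb1, hb2, hb3]

open MeasureTheory in
lemma integrableOn_maxlow (h : IsMarkov P π) (t : ℝ) :
    IntegrableOn (fun u => max (t - meas π (levelSet (rev P π) A u)) 0)
      (Set.Ioc (0:ℝ) 1) volume := by
  refine integrableOn_unit ?_ (|t| + 1) fun x => ?_
  · exact ((measurable_const.sub (measF_measurable _)).max measurable_const)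
  · rw [abs_of_nonneg (le_max_right _ _)]
    have h1 := measF_nonneg (A := A) h (rev P π) x
    have := abs_nonneg t
    have := le_abs_self t
    simp only [max_le_iff]
    constructor <;> linarith

open MeasureTheory in
lemma integrableOn_maxhigh (h : IsMarkov P π) {t : ℝ} (ht : 0 ≤ t) :
    IntegrableOn (fun u => max (meas π (levelSet (rev P π) A u) - t) 0)
      (Set.Ioc (0:ℝ) 1) volume := by
  refine integrableOn_unit ?_ 1 fun x => ?_
  · exact (((measF_measurable _).sub measurable_const).max measurable_const)
  · rw [abs_of_nonneg (le_max_right _ _)]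
    have h1 := measF_le_one (A := A) h (rev P π) x
    simp only [max_le_iff]
    constructor <;> linarith

open MeasureTheory in
lemma integrableOn_mint (h : IsMarkov P π) (t : ℝ) :
    IntegrableOn (fun u => min t (meas π (levelSet (rev P π) A u)))
      (Set.Ioc (0:ℝ) 1) volume := by
  refine integrableOn_unit ?_ (|t| + 1) fun x => ?_
  · exact measurable_const.min (measF_measurable _)
  · have h0 := measF_nonneg (A := A) h (rev P π) x
    have h1 := measF_le_one (A := A) h (rev P π) x
    have := abs_nonneg t
    have := le_abs_self t
    have := neg_abs_le t
    rw [abs_le]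
    constructor
    · simp only [le_min_iff]; constructor <;> linarith
    · calc min t (meas π (levelSet (rev P π) A x)) ≤ t := min_le_left _ _
        _ ≤ |t| + 1 := by linarith

open MeasureTheory in
lemma psi_lb_low (h : IsMarkov P π) (hA0 : 0 < meas π A) {t : ℝ} (ht0 : 0 ≤ t)
    (htM : t ≤ meas π A) :
    (∫ u in Set.Ioc (0:ℝ) 1, max (t - meas π (levelSet (rev P π) A u)) 0)
      ≤ Psi (rev P π) π A t := by
  rw [Psi, if_pos htM]
  refine le_csInf ⟨_, _, fracsub_A h hA0 ht0 htM, rfl⟩ ?_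
  rintro q ⟨g, hg, rfl⟩
  rw [fracFlow_eq_sub h hg, sum_gc_eq_integral h hg.1]
  have h1 : (∫ u in Set.Ioc (0:ℝ) 1, ∑ v, (if u < setProb (rev P π) v A then g v * π v else 0))
      ≤ ∫ u in Set.Ioc (0:ℝ) 1, min t (meas π (levelSet (rev P π) A u)) :=
    setIntegral_mono_on (integrable_Sg _) (integrableOn_mint h t)
      measurableSet_Ioc (fun u _ => Sg_le h hg u)
  have h2 : (∫ u in Set.Ioc (0:ℝ) 1, max (t - meas π (levelSet (rev P π) A u)) 0)
      = t - ∫ u in Set.Ioc (0:ℝ) 1, min t (meas π (levelSet (rev P π) A u)) := by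
    have hcongr : ∀ u : ℝ, max (t - meas π (levelSet (rev P π) A u)) 0
        = t - min t (meas π (levelSet (rev P π) A u)) := by
      intro u
      rcases le_total t (meas π (levelSet (rev P π) A u)) with hle | hle
      · rw [min_eq_left hle, max_eq_right (by linarith), sub_self]
      · rw [min_eq_right hle, max_eq_left (by linarith)]
    simp_rw [hcongr]
    rw [integral_sub (integrableOn_unit measurable_const |t| fun x => le_refl _)
      (integrableOn_mint h t)]
    congr 1
    rw [setIntegral_const]
    simp [Real.volume_Ioc]
  linarith

open MeasureTheory in
lemma psi_lb_high (h : IsMarkov P π) (hA : meas π A ≤ 1 / 2) {t : ℝ}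
    (htM : meas π A < t) (ht1 : t < 1) :
    (∫ u in Set.Ioc (0:ℝ) 1, max (meas π (levelSet (rev P π) A u) - t) 0)
      ≤ Psi (rev P π) π A t := by
  rw [Psi, if_neg (not_le.2 htM)]
  refine le_csInf ⟨_, _, fracsub_compl h (by linarith) (s := 1 - t)
    (by linarith) (by linarith), rfl⟩ ?_
  rintro q ⟨g, hg, rfl⟩
  show _ ≤ fracFlow (rev P π) π g A
  unfold fracFlow
  rw [sum_gc_eq_integral h hg.1]
  refine setIntegral_mono_on (integrableOn_maxhigh h (by linarith [meas_nonneg h A])) (integrable_Sg _)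
    measurableSet_Ioc (fun u _ => ?_)
  refine max_le ?_ ?_
  · have := Sg_ge h hg u
    linarith
  · refine Finset.sum_nonneg fun v _ => ?_
    split
    · exact mul_nonneg (hg.1 v).1 (h.piPos v).le
    · exact le_refl _

def PsiLow (P : K → K → ℝ) (π : K → ℝ) (A : Finset K) : ℝ → ℝ := fun t =>
  sInf {q : ℝ | ∃ g : K → ℝ, IsFracSub π A g t ∧ q = fracFlow (rev P π) π g Aᶜ}

def PsiHigh (P : K → K → ℝ) (π : K → ℝ) (A : Finset K) : ℝ → ℝ := fun t =>
  sInf {q : ℝ | ∃ g : K → ℝ, IsFracSub π Aᶜ g (1 - t) ∧ q = fracFlow (rev P π) π g A}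

lemma Psi_eq (t : ℝ) : Psi (rev P π) π A t
    = if t ≤ meas π A then PsiLow P π A t else PsiHigh P π A t := rfl

lemma fracsub_mass_nonneg (h : IsMarkov P π) {S : Finset K} {g : K → ℝ} {t : ℝ}
    (hg : IsFracSub π S g t) : 0 ≤ t := by
  rw [← hg.2.2]
  exact Finset.sum_nonneg fun v _ => mul_nonneg (hg.1 v).1 (h.piPos v).le

lemma fracsub_mass_le (h : IsMarkov P π) {S : Finset K} {g : K → ℝ} {t : ℝ}
    (hg : IsFracSub π S g t) : t ≤ meas π S := by
  rw [← hg.2.2]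
  have : ∑ v, g v * π v = ∑ v ∈ S, g v * π v := by
    refine (Finset.sum_subset (Finset.subset_univ S) fun v _ hv => ?_).symm
    rw [hg.2.1 v hv, zero_mul]
  rw [this]
  refine Finset.sum_le_sum fun v _ => ?_
  calc g v * π v ≤ 1 * π v := mul_le_mul_of_nonneg_right (hg.1 v).2 (h.piPos v).le
    _ = π v := one_mul _

lemma fracsub_smul {S : Finset K} {g : K → ℝ} {t : ℝ} (hg : IsFracSub π S g t)
    {r : ℝ} (hr0 : 0 ≤ r) (hr1 : r ≤ 1) : IsFracSub π S (fun v => r * g v) (r * t) := by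
  refine ⟨fun v => ⟨mul_nonneg hr0 (hg.1 v).1, ?_⟩, fun v hv => by
    dsimp only; rw [hg.2.1 v hv, mul_zero], ?_⟩
  · calc r * g v ≤ 1 * 1 := mul_le_mul hr1 (hg.1 v).2 (hg.1 v).1 zero_le_one
      _ = 1 := one_mul _
  · simp_rw [mul_assoc]
    rw [← Finset.mul_sum, hg.2.2]

lemma fracFlow_smul (R : K → K → ℝ) {g : K → ℝ} (r : ℝ) (C : Finset K) :
    fracFlow R π (fun v => r * g v) C = r * fracFlow R π g C := by
  unfold fracFlow
  rw [Finset.mul_sum]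
  exact Finset.sum_congr rfl fun v _ => by ring

lemma psiset_bddBelow (h : IsMarkov P π) (S C : Finset K) (t : ℝ) :
    BddBelow {q : ℝ | ∃ g : K → ℝ, IsFracSub π S g t ∧ q = fracFlow (rev P π) π g C} := by
  refine ⟨0, ?_⟩
  rintro q ⟨g, hg, rfl⟩
  exact fracFlow_nonneg h (fun v => (hg.1 v).1) C

lemma PsiLow_nonneg (h : IsMarkov P π) (t : ℝ) : 0 ≤ PsiLow P π A t := by
  refine Real.sInf_nonneg ?_
  rintro q ⟨g, hg, rfl⟩
  exact fracFlow_nonneg h (fun v => (hg.1 v).1) _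

lemma PsiHigh_nonneg (h : IsMarkov P π) (t : ℝ) : 0 ≤ PsiHigh P π A t := by
  refine Real.sInf_nonneg ?_
  rintro q ⟨g, hg, rfl⟩
  exact fracFlow_nonneg h (fun v => (hg.1 v).1) _

lemma PsiLow_zero_of_not (h : IsMarkov P π) {t : ℝ} (ht : t < 0 ∨ meas π A < t) :
    PsiLow P π A t = 0 := by
  have : {q : ℝ | ∃ g : K → ℝ, IsFracSub π A g t ∧ q = fracFlow (rev P π) π g Aᶜ} = ∅ := by
    rw [Set.eq_empty_iff_forall_notMem]
    rintro q ⟨g, hg, rfl⟩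
    have h1 := fracsub_mass_nonneg h hg
    have h2 := fracsub_mass_le h hg
    rcases ht with ht | ht <;> linarith
  rw [PsiLow, this, Real.sInf_empty]

lemma PsiHigh_zero_of_lt (h : IsMarkov P π) {t : ℝ} (ht : t < meas π A) :
    PsiHigh P π A t = 0 := by
  have : {q : ℝ | ∃ g : K → ℝ, IsFracSub π Aᶜ g (1 - t) ∧ q = fracFlow (rev P π) π g A} = ∅ := by
    rw [Set.eq_empty_iff_forall_notMem]
    rintro q ⟨g, hg, rfl⟩
    have h2 := fracsub_mass_le h hg
    rw [meas_compl h A] at h2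
    linarith
  rw [PsiHigh, this, Real.sInf_empty]

lemma PsiHigh_zero_of_gt (h : IsMarkov P π) {t : ℝ} (ht : 1 < t) :
    PsiHigh P π A t = 0 := by
  have : {q : ℝ | ∃ g : K → ℝ, IsFracSub π Aᶜ g (1 - t) ∧ q = fracFlow (rev P π) π g A} = ∅ := by
    rw [Set.eq_empty_iff_forall_notMem]
    rintro q ⟨g, hg, rfl⟩
    have h1 := fracsub_mass_nonneg h hg
    linarith
  rw [PsiHigh, this, Real.sInf_empty]

lemma PsiLow_mono (h : IsMarkov P π) (hA0 : 0 < meas π A) {t t' : ℝ}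
    (ht0 : 0 ≤ t) (htt : t ≤ t') (htM : t' ≤ meas π A) :
    PsiLow P π A t ≤ PsiLow P π A t' := by
  rcases eq_or_lt_of_le (le_trans ht0 htt) with h0 | h0
  · have ht'0 : t' = 0 := h0.symm
    have : t = 0 := le_antisymm (by linarith) ht0
    rw [this, ← ht'0]
  · rw [PsiLow]
    refine le_csInf ⟨_, _, fracsub_A h hA0 (le_trans ht0 htt) htM, rfl⟩ ?_
    rintro q ⟨g, hg, rfl⟩
    have hq0 : 0 ≤ fracFlow (rev P π) π g Aᶜ := fracFlow_nonneg h (fun v => (hg.1 v).1) _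
    have hmem : (t / t') * fracFlow (rev P π) π g Aᶜ
        ∈ {q : ℝ | ∃ g : K → ℝ, IsFracSub π A g t ∧ q = fracFlow (rev P π) π g Aᶜ} := by
      refine ⟨fun v => (t / t') * g v, ?_, (fracFlow_smul _ _ _).symm⟩
      have := fracsub_smul hg (r := t / t') (div_nonneg ht0 h0.le) ((div_le_one h0).2 htt)
      rwa [div_mul_cancel₀ t h0.ne'] at this
    calc PsiLow P π A t ≤ (t / t') * fracFlow (rev P π) π g Aᶜ :=
          csInf_le (psiset_bddBelow h A Aᶜ t) hmem
      _ ≤ 1 * fracFlow (rev P π) π g Aᶜ :=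
          mul_le_mul_of_nonneg_right ((div_le_one h0).2 htt) hq0
      _ = fracFlow (rev P π) π g Aᶜ := one_mul _

lemma PsiHigh_anti (h : IsMarkov P π) (hA : meas π A ≤ 1 / 2) {t t' : ℝ}
    (htM : meas π A ≤ t) (htt : t ≤ t') :
    PsiHigh P π A t' ≤ PsiHigh P π A t := by
  have hA1 : meas π A < 1 := by linarith
  rcases le_or_gt t' 1 with ht'1 | ht'1
  · -- both ≤ 1
    rcases eq_or_lt_of_le (le_trans htt ht'1) with h1 | h1
    · -- t = 1, so t' = 1
      have : t' = 1 := le_antisymm ht'1 (h1 ▸ htt)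
      rw [this, ← h1]
    · -- t < 1
      have hs : 0 < 1 - t := by linarith
      rw [PsiHigh]
      refine le_csInf ⟨_, _, fracsub_compl h hA1 (s := 1 - t) (by linarith) (by linarith), rfl⟩ ?_
      rintro q ⟨g, hg, rfl⟩
      have hq0 : 0 ≤ fracFlow (rev P π) π g A := fracFlow_nonneg h (fun v => (hg.1 v).1) _
      set r := (1 - t') / (1 - t) with hr
      have hr0 : 0 ≤ r := div_nonneg (by linarith) hs.le
      have hr1 : r ≤ 1 := (div_le_one hs).2 (by linarith)
      have hmem : r * fracFlow (rev P π) π g A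
          ∈ {q : ℝ | ∃ g : K → ℝ, IsFracSub π Aᶜ g (1 - t') ∧ q = fracFlow (rev P π) π g A} := by
        refine ⟨fun v => r * g v, ?_, (fracFlow_smul _ _ _).symm⟩
        have := fracsub_smul hg hr0 hr1
        rwa [hr, div_mul_cancel₀ (1 - t') hs.ne'] at this
      calc PsiHigh P π A t' ≤ r * fracFlow (rev P π) π g A :=
            csInf_le (psiset_bddBelow h Aᶜ A (1 - t')) hmem
        _ ≤ 1 * fracFlow (rev P π) π g A := mul_le_mul_of_nonneg_right hr1 hq0
        _ = fracFlow (rev P π) π g A := one_mul _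
  · rw [PsiHigh_zero_of_gt h ht'1]
    exact PsiHigh_nonneg h t

lemma PsiLow_measurable (h : IsMarkov P π) (hA0 : 0 < meas π A) :
    Measurable (PsiLow P π A) := by
  have hmono : Monotone (fun t => PsiLow P π A (min (max t 0) (meas π A))) := by
    intro a b hab
    refine PsiLow_mono h hA0 ?_ ?_ ?_
    · exact le_min (le_max_right a 0) hA0.le
    · exact min_le_min (max_le_max hab (le_refl 0)) (le_refl _)
    · exact min_le_right _ _
  have heq : PsiLow P π A = fun t =>
      if t < 0 ∨ meas π A < t then 0 else PsiLow P π A (min (max t 0) (meas π A)) := by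
    funext t
    split
    · exact PsiLow_zero_of_not h (by assumption)
    · rename_i hcon
      push_neg at hcon
      rw [max_eq_left hcon.1, min_eq_left hcon.2]
  rw [heq]
  refine Measurable.ite ?_ measurable_const hmono.measurable
  exact (measurableSet_Iio (a := (0:ℝ))).union (measurableSet_Ioi (a := meas π A))

lemma PsiHigh_measurable (h : IsMarkov P π) (hA : meas π A ≤ 1 / 2) :
    Measurable (PsiHigh P π A) := by
  have hanti : Antitone (fun t => PsiHigh P π A (max t (meas π A))) := by
    intro a b hab
    exact PsiHigh_anti h hA (le_max_right a _) (max_le_max hab (le_refl _))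
  have heq : PsiHigh P π A = fun t =>
      if t < meas π A then 0 else PsiHigh P π A (max t (meas π A)) := by
    funext t
    split
    · exact PsiHigh_zero_of_lt h (by assumption)
    · rename_i hcon
      push_neg at hcon
      rw [max_eq_left hcon]
  rw [heq]
  exact Measurable.ite measurableSet_Iio measurable_const hanti.measurable

lemma Psi_measurable (h : IsMarkov P π) (hA0 : 0 < meas π A) (hA : meas π A ≤ 1 / 2) :
    Measurable (Psi (rev P π) π A) := by
  have : Psi (rev P π) π A = fun t =>
      if t ≤ meas π A then PsiLow P π A t else PsiHigh P π A t := by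
    funext t; exact Psi_eq t
  rw [this]
  exact Measurable.ite measurableSet_Iic (PsiLow_measurable h hA0) (PsiHigh_measurable h hA)

lemma Psi_nonneg (h : IsMarkov P π) (t : ℝ) : 0 ≤ Psi (rev P π) π A t := by
  rw [Psi_eq]
  split
  · exact PsiLow_nonneg h t
  · exact PsiHigh_nonneg h t

lemma Psi_le_low (h : IsMarkov P π) (hA0 : 0 < meas π A) {t : ℝ} (ht0 : 0 ≤ t)
    (htM : t ≤ meas π A) : Psi (rev P π) π A t ≤ t := by
  rw [Psi_eq, if_pos htM]
  refine le_trans (csInf_le (psiset_bddBelow h A Aᶜ t) ⟨_, fracsub_A h hA0 ht0 htM, rfl⟩) ?_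
  exact fracFlow_le_mass h (fracsub_A h hA0 ht0 htM) Aᶜ

lemma Psi_le_high (h : IsMarkov P π) (hA : meas π A ≤ 1 / 2) {t : ℝ}
    (htM : meas π A < t) (ht1 : t ≤ 1) : Psi (rev P π) π A t ≤ 1 - t := by
  rw [Psi_eq, if_neg (not_le.2 htM)]
  have hfs := fracsub_compl h (by linarith) (s := 1 - t) (by linarith) (by linarith)
  refine le_trans (csInf_le (psiset_bddBelow h Aᶜ A (1 - t)) ⟨_, hfs, rfl⟩) ?_
  exact fracFlow_le_mass h hfs A

open MeasureTheory in
lemma intervalIntegrable_of_bounded {f : ℝ → ℝ} (hf : Measurable f) {C : ℝ}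
    (h : ∀ x, |f x| ≤ C) (a b : ℝ) : IntervalIntegrable f volume a b := by
  rw [intervalIntegrable_iff]
  refine Integrable.mono' (g := fun _ => C) ?_ hf.aestronglyMeasurable
    (Filter.Eventually.of_forall h)
  have : IntegrableOn (fun _ => C) (Set.uIoc a b) volume := by
    refine integrableOn_const ?_
    rw [Set.uIoc]
    simp [Real.volume_Ioc]
  exact this

lemma scalar_key {c M : ℝ} (hc0 : 0 < c) (hM0 : 0 < M) :
    (Real.sqrt c - Real.sqrt M) ^ 2 ≤ c * Real.log c - c * Real.log M - c + M := by
  set sc := Real.sqrt c with hsc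
  set sM := Real.sqrt M with hsM
  have hscpos : 0 < sc := Real.sqrt_pos.2 hc0
  have hsMpos : 0 < sM := Real.sqrt_pos.2 hM0
  have hcs : sc * sc = c := Real.mul_self_sqrt hc0.le
  have hMs : sM * sM = M := Real.mul_self_sqrt hM0.le
  have hlog : Real.log (sM / sc) ≤ sM / sc - 1 :=
    Real.log_le_sub_one_of_pos (by positivity)
  have hlogeq : Real.log (sM / sc) = (Real.log M - Real.log c) / 2 := by
    rw [Real.log_div hsMpos.ne' hscpos.ne', hsM, hsc, Real.log_sqrt hM0.le,
      Real.log_sqrt hc0.le]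
    ring
  have hct : c * (sM / sc) = sc * sM := by
    field_simp [← hcs]
    nlinarith [hcs]
  have hmul : c * ((Real.log M - Real.log c) / 2) ≤ sc * sM - c := by
    calc c * ((Real.log M - Real.log c) / 2) = c * Real.log (sM / sc) := by rw [hlogeq]
      _ ≤ c * (sM / sc - 1) := mul_le_mul_of_nonneg_left hlog hc0.le
      _ = sc * sM - c := by rw [mul_sub, hct, mul_one]
  nlinarith [hmul, hcs, hMs]

open intervalIntegral in
lemma tint_eval {c M : ℝ} (hc0 : 0 ≤ c) (hc1 : c ≤ 1) (hM0 : 0 < M) (hM1 : M ≤ 1) :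
    (Real.sqrt c - Real.sqrt M) ^ 2
      ≤ ∫ t in Set.Ioc (0:ℝ) 1,
          (if t ≤ M then max (t - c) 0 else max (c - t) 0) / t := by
  set φ : ℝ → ℝ := fun t => (if t ≤ M then max (t - c) 0 else max (c - t) 0) / t with hφ
  have hφmeas : Measurable φ := by
    refine Measurable.div ?_ measurable_id
    exact Measurable.ite measurableSet_Iic
      ((measurable_id.sub_const c).max measurable_const)
      ((measurable_const.sub measurable_id).max measurable_const)
  have hφbd : ∀ x, |φ x| ≤ 1 / M := by
    intro x
    have h1M : 1 ≤ 1 / M := by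
      rw [le_div_iff₀ hM0]; linarith
    have h0M : 0 ≤ 1 / M := by positivity
    show |(if x ≤ M then max (x - c) 0 else max (c - x) 0) / x| ≤ 1 / M
    rcases le_or_gt x 0 with hx | hx
    · rcases eq_or_lt_of_le hx with hx0 | hx0
      · rw [hx0, div_zero, abs_zero]; exact h0M
      · have h1 : x ≤ M := by linarith
        rw [if_pos h1, max_eq_right (by linarith), zero_div, abs_zero]
        exact h0M
    · split
      · rename_i hxM
        rw [abs_of_nonneg (div_nonneg (le_max_right _ _) hx.le)]
        calc max (x - c) 0 / x ≤ 1 := by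
              rw [div_le_one hx]
              exact max_le (by linarith) hx.le
          _ ≤ 1 / M := h1M
      · rename_i hxM
        push_neg at hxM
        rw [abs_of_nonneg (div_nonneg (le_max_right _ _) hx.le)]
        calc max (c - x) 0 / x ≤ 1 / x := by
              refine (div_le_div_iff_of_pos_right hx).2 (max_le (by linarith) zero_le_one)
          _ ≤ 1 / M := one_div_le_one_div_of_le hM0 hxM.le
  have hII : ∀ a b : ℝ, IntervalIntegrable φ volume a b := fun a b =>
    intervalIntegrable_of_bounded hφmeas hφbd a b
  have hset : (∫ t in Set.Ioc (0:ℝ) 1, φ t) = ∫ t in (0:ℝ)..1, φ t :=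
    (intervalIntegral.integral_of_le (by norm_num)).symm
  rw [hset]
  have hzero : ∀ a b : ℝ, a ≤ b → (∀ t ∈ Set.Ioc a b, φ t = 0) →
      (∫ t in a..b, φ t) = 0 := by
    intro a b hab h0
    rw [intervalIntegral.integral_of_le hab,
      MeasureTheory.setIntegral_congr_fun measurableSet_Ioc h0]
    simp
  rcases eq_or_lt_of_le hc0 with hc | hc
  · -- c = 0
    rw [← integral_add_adjacent_intervals (hII 0 M) (hII M 1)]
    have h1 : (∫ t in (0:ℝ)..M, φ t) = M := by
      rw [intervalIntegral.integral_of_le hM0.le,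
        MeasureTheory.setIntegral_congr_fun measurableSet_Ioc
          (g := fun _ => (1:ℝ)) ?_]
      · rw [MeasureTheory.setIntegral_const]
        simp [Real.volume_Ioc, hM0.le]
      · intro t ht
        show (if t ≤ M then max (t - c) 0 else max (c - t) 0) / t = 1
        rw [if_pos ht.2, ← hc, sub_zero, max_eq_left ht.1.le, div_self ht.1.ne']
    have h2 : (∫ t in M..1, φ t) = 0 := by
      refine hzero M 1 hM1 fun t ht => ?_
      show (if t ≤ M then max (t - c) 0 else max (c - t) 0) / t = 0
      rw [if_neg (not_le.2 ht.1), max_eq_right (by rw [← hc]; linarith [ht.1, hM0]),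
        zero_div]
    rw [h1, h2, ← hc]
    rw [Real.sqrt_zero]
    rw [zero_sub, neg_sq, Real.sq_sqrt hM0.le]
    linarith
  · -- 0 < c
    rcases le_or_gt c M with hcM | hcM
    · rw [← integral_add_adjacent_intervals (hII 0 c) (hII c 1),
        ← integral_add_adjacent_intervals (hII c M) (hII M 1)]
      have h1 : (∫ t in (0:ℝ)..c, φ t) = 0 := by
        refine hzero 0 c hc.le fun t ht => ?_
        show (if t ≤ M then max (t - c) 0 else max (c - t) 0) / t = 0
        rw [if_pos (le_trans ht.2 hcM), max_eq_right (by linarith [ht.2]), zero_div]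
      have h3 : (∫ t in M..1, φ t) = 0 := by
        refine hzero M 1 hM1 fun t ht => ?_
        show (if t ≤ M then max (t - c) 0 else max (c - t) 0) / t = 0
        rw [if_neg (not_le.2 ht.1), max_eq_right (by linarith [ht.1]), zero_div]
      have hderiv : ∀ x ∈ Set.uIcc c M, HasDerivAt
          (fun t => t - c * Real.log t) (φ x) x := by
        intro x hx
        rw [Set.uIcc_of_le hcM] at hx
        have hxpos : 0 < x := lt_of_lt_of_le hc hx.1
        have hφx : φ x = 1 - c * x⁻¹ := by
          show (if x ≤ M then max (x - c) 0 else max (c - x) 0) / x = 1 - c * x⁻¹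
          rw [if_pos hx.2, max_eq_left (by linarith [hx.1])]
          field_simp
        rw [hφx]
        exact (hasDerivAt_id x).sub ((Real.hasDerivAt_log hxpos.ne').const_mul c)
      have h2 : (∫ t in c..M, φ t)
          = (M - c * Real.log M) - (c - c * Real.log c) :=
        intervalIntegral.integral_eq_sub_of_hasDerivAt hderiv (hII c M)
      rw [h1, h2, h3]
      have := scalar_key hc hM0
      linarith
    · rw [← integral_add_adjacent_intervals (hII 0 c) (hII c 1),
        ← integral_add_adjacent_intervals (hII 0 M) (hII M c)]
      have h1 : (∫ t in (0:ℝ)..M, φ t) = 0 := by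
        refine hzero 0 M hM0.le fun t ht => ?_
        show (if t ≤ M then max (t - c) 0 else max (c - t) 0) / t = 0
        rw [if_pos ht.2, max_eq_right (by linarith [ht.2]), zero_div]
      have h3 : (∫ t in c..1, φ t) = 0 := by
        refine hzero c 1 hc1 fun t ht => ?_
        show (if t ≤ M then max (t - c) 0 else max (c - t) 0) / t = 0
        rw [if_neg (by push_neg; linarith [ht.1]), max_eq_right (by linarith [ht.1]),
          zero_div]
      have hderiv : ∀ x ∈ Set.Ioo M c, HasDerivAt
          (fun t => c * Real.log t - t) (φ x) x := by
        intro x hx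
        have hxpos : 0 < x := lt_trans hM0 hx.1
        have hφx : φ x = c * x⁻¹ - 1 := by
          show (if x ≤ M then max (x - c) 0 else max (c - x) 0) / x = c * x⁻¹ - 1
          rw [if_neg (not_le.2 hx.1), max_eq_left (by linarith [hx.2])]
          field_simp
        rw [hφx]
        exact ((Real.hasDerivAt_log hxpos.ne').const_mul c).sub (hasDerivAt_id x)
      have hcont : ContinuousOn (fun t => c * Real.log t - t) (Set.Icc M c) := by
        refine ContinuousOn.sub ?_ continuousOn_id
        refine ContinuousOn.mul continuousOn_const (Real.continuousOn_log.mono ?_)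
        intro x hx
        simp only [Set.mem_compl_iff, Set.mem_singleton_iff]
        exact (lt_of_lt_of_le hM0 hx.1).ne'
      have h2 : (∫ t in M..c, φ t)
          = (c * Real.log c - c) - (c * Real.log M - M) :=
        intervalIntegral.integral_eq_sub_of_hasDerivAt_of_le hcM.le hcont hderiv (hII M c)
      rw [h1, h2, h3]
      have := scalar_key hc hM0
      linarith

lemma Psi_zero_of_nonpos (h : IsMarkov P π) (hA0 : 0 < meas π A) {t : ℝ} (ht : t ≤ 0) :
    Psi (rev P π) π A t = 0 := by
  rcases eq_or_lt_of_le ht with ht0 | ht0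
  · rw [ht0]
    exact le_antisymm (Psi_le_low h hA0 le_rfl hA0.le) (Psi_nonneg h 0)
  · rw [Psi_eq, if_pos (by linarith)]
    exact PsiLow_zero_of_not h (Or.inl ht0)

lemma Psi_div_bound (h : IsMarkov P π) (hA0 : 0 < meas π A) (hA : meas π A ≤ 1 / 2) :
    ∀ t : ℝ, |Psi (rev P π) π A t / min t (1 - t)| ≤ 1 / meas π A := by
  intro t
  have h1M : 1 ≤ 1 / meas π A := by rw [le_div_iff₀ hA0]; linarith
  have h0M : 0 ≤ 1 / meas π A := by positivity
  rcases le_or_gt t 0 with ht | ht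
  · rw [Psi_zero_of_nonpos h hA0 ht, zero_div, abs_zero]; exact h0M
  rcases le_or_gt t (meas π A) with htM | htM
  · have hmin : min t (1 - t) = t := min_eq_left (by linarith)
    rw [hmin, abs_of_nonneg (div_nonneg (Psi_nonneg h t) ht.le)]
    calc Psi (rev P π) π A t / t ≤ 1 := by
          rw [div_le_one ht]
          exact Psi_le_low h hA0 ht.le htM
      _ ≤ 1 / meas π A := h1M
  rcases lt_trichotomy t 1 with ht1 | ht1 | ht1
  · have hmpos : 0 < min t (1 - t) := lt_min ht (by linarith)
    rw [abs_of_nonneg (div_nonneg (Psi_nonneg h t) hmpos.le)]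
    have hple : Psi (rev P π) π A t ≤ 1 - t := Psi_le_high h hA htM ht1.le
    rcases le_or_gt t (1 / 2) with ht2 | ht2
    · have hmin : min t (1 - t) = t := min_eq_left (by linarith)
      rw [hmin]
      calc Psi (rev P π) π A t / t ≤ 1 / t :=
            (div_le_div_iff_of_pos_right ht).2 (by linarith)
        _ ≤ 1 / meas π A := one_div_le_one_div_of_le hA0 htM.le
    · have hmin : min t (1 - t) = 1 - t := min_eq_right (by linarith)
      rw [hmin]
      calc Psi (rev P π) π A t / (1 - t) ≤ 1 := by
            rw [div_le_one (by linarith)]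
            exact hple
        _ ≤ 1 / meas π A := h1M
  · rw [ht1]
    norm_num
    exact hA0.le
  · have : Psi (rev P π) π A t = 0 := by
      rw [Psi_eq, if_neg (by push_neg; linarith)]
      exact PsiHigh_zero_of_gt h ht1
    rw [this, zero_div, abs_zero]; exact h0M

open MeasureTheory in
lemma integrableOn_PsiDiv (h : IsMarkov P π) (hA0 : 0 < meas π A)
    (hA : meas π A ≤ 1 / 2) :
    IntegrableOn (fun t => Psi (rev P π) π A t / min t (1 - t))
      (Set.Ioc (0:ℝ) 1) volume := by
  refine integrableOn_unit ?_ (1 / meas π A) (Psi_div_bound h hA0 hA)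
  exact (Psi_measurable h hA0 hA).div (measurable_id.min (measurable_const.sub measurable_id))

def kfun (P : K → K → ℝ) (π : K → ℝ) (A : Finset K) : ℝ → ℝ → ℝ := fun t u =>
  (if t ≤ meas π A then max (t - meas π (levelSet (rev P π) A u)) 0
    else max (meas π (levelSet (rev P π) A u) - t) 0) / t

lemma kfun_measurable : Measurable (Function.uncurry (kfun P π A)) := by
  unfold Function.uncurry kfun
  refine Measurable.div ?_ measurable_fst
  refine Measurable.ite (measurableSet_le measurable_fst measurable_const) ?_ ?_
  · exact (measurable_fst.sub ((measF_measurable _).comp measurable_snd)).max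
      measurable_const
  · exact (((measF_measurable _).comp measurable_snd).sub measurable_fst).max
      measurable_const

lemma kfun_bound (h : IsMarkov P π) (hA0 : 0 < meas π A) (hA : meas π A ≤ 1 / 2) :
    ∀ t u : ℝ, |kfun P π A t u| ≤ 1 / meas π A := by
  intro t u
  set c := meas π (levelSet (rev P π) A u) with hc
  have hc0 : 0 ≤ c := measF_nonneg h _ u
  have hc1 : c ≤ 1 := measF_le_one h _ u
  have h1M : 1 ≤ 1 / meas π A := by rw [le_div_iff₀ hA0]; linarith
  have h0M : 0 ≤ 1 / meas π A := by positivity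
  show |(if t ≤ meas π A then max (t - c) 0 else max (c - t) 0) / t| ≤ 1 / meas π A
  rcases le_or_gt t 0 with ht | ht
  · rcases eq_or_lt_of_le ht with ht0 | ht0
    · rw [ht0, div_zero, abs_zero]; exact h0M
    · rw [if_pos (by linarith), max_eq_right (by linarith), zero_div, abs_zero]
      exact h0M
  · split
    · rw [abs_of_nonneg (div_nonneg (le_max_right _ _) ht.le)]
      calc max (t - c) 0 / t ≤ 1 := by
            rw [div_le_one ht]
            exact max_le (by linarith) ht.le
        _ ≤ 1 / meas π A := h1M
    · rename_i htM
      push_neg at htM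
      rw [abs_of_nonneg (div_nonneg (le_max_right _ _) ht.le)]
      calc max (c - t) 0 / t ≤ 1 / t :=
            (div_le_div_iff_of_pos_right ht).2 (max_le (by linarith) zero_le_one)
        _ ≤ 1 / meas π A := one_div_le_one_div_of_le hA0 htM.le

open MeasureTheory in
lemma finite_unit : IsFiniteMeasure (volume.restrict (Set.Ioc (0:ℝ) 1)) := by
  constructor
  rw [Measure.restrict_apply_univ]
  simp [Real.volume_Ioc]

open MeasureTheory in
lemma kfun_integrable_joint (h : IsMarkov P π) (hA0 : 0 < meas π A)
    (hA : meas π A ≤ 1 / 2) :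
    Integrable (Function.uncurry (kfun P π A))
      ((volume.restrict (Set.Ioc (0:ℝ) 1)).prod (volume.restrict (Set.Ioc (0:ℝ) 1))) := by
  haveI := finite_unit
  refine (integrable_const (1 / meas π A)).mono'
    kfun_measurable.aestronglyMeasurable
    (Filter.Eventually.of_forall fun p => kfun_bound h hA0 hA p.1 p.2)

open MeasureTheory in
lemma ell_le (h : IsMarkov P π) (hA0 : 0 < meas π A) (hA : meas π A ≤ 1 / 2)
    {t : ℝ} (ht : t ∈ Set.Ioc (0:ℝ) 1) :
    (∫ u in Set.Ioc (0:ℝ) 1, kfun P π A t u)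
      ≤ Psi (rev P π) π A t / min t (1 - t) := by
  obtain ⟨ht0, ht1⟩ := ht
  rcases le_or_gt t (meas π A) with htM | htM
  · have hk : ∀ u : ℝ, kfun P π A t u
        = max (t - meas π (levelSet (rev P π) A u)) 0 / t := by
      intro u
      unfold kfun
      rw [if_pos htM]
    simp_rw [hk]
    rw [integral_div]
    have hmin : min t (1 - t) = t := min_eq_left (by linarith)
    rw [hmin]
    exact (div_le_div_iff_of_pos_right ht0).2 (psi_lb_low h hA0 ht0.le htM)
  · have hk : ∀ u : ℝ, kfun P π A t u
        = max (meas π (levelSet (rev P π) A u) - t) 0 / t := by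
      intro u
      unfold kfun
      rw [if_neg (not_le.2 htM)]
    simp_rw [hk]
    rw [integral_div]
    rcases eq_or_lt_of_le ht1 with ht1e | ht1l
    · have hz : ∀ u ∈ Set.Ioc (0:ℝ) 1,
          max (meas π (levelSet (rev P π) A u) - t) 0 = 0 := by
        intro u _
        rw [max_eq_right]
        have := measF_le_one (A := A) h (rev P π) u
        linarith [ht1e]
      rw [setIntegral_congr_fun measurableSet_Ioc hz]
      simp only [integral_zero, zero_div]
      subst ht1e
      have hm0 : min (1:ℝ) (1 - 1) = 0 := by norm_num
      rw [hm0, div_zero]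
    · calc (∫ u in Set.Ioc (0:ℝ) 1,
            max (meas π (levelSet (rev P π) A u) - t) 0) / t
          ≤ Psi (rev P π) π A t / t :=
            (div_le_div_iff_of_pos_right ht0).2 (psi_lb_high h hA htM ht1l)
        _ ≤ Psi (rev P π) π A t / min t (1 - t) :=
            div_le_div_of_nonneg_left (Psi_nonneg h t) (lt_min ht0 (by linarith))
              (min_le_left _ _)

open MeasureTheory in
lemma integrableOn_sqrtF (h : IsMarkov P π) :
    IntegrableOn (fun u => Real.sqrt (meas π (levelSet (rev P π) A u)))
      (Set.Ioc (0:ℝ) 1) volume := by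
  refine integrableOn_unit (Real.continuous_sqrt.measurable.comp (measF_measurable _)) 1
    fun x => ?_
  rw [abs_of_nonneg (Real.sqrt_nonneg _)]
  exact Real.sqrt_le_one.mpr (measF_le_one h _ x)

open MeasureTheory in
lemma integrableOn_sqF (h : IsMarkov P π) :
    IntegrableOn (fun u => (Real.sqrt (meas π (levelSet (rev P π) A u))
      - Real.sqrt (meas π A)) ^ 2) (Set.Ioc (0:ℝ) 1) volume := by
  refine integrableOn_unit ?_ 4 fun x => ?_
  · exact ((Real.continuous_sqrt.measurable.comp (measF_measurable _)).sub
      measurable_const).pow_const 2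
  · rw [abs_of_nonneg (sq_nonneg _)]
    have h1 : 0 ≤ Real.sqrt (meas π (levelSet (rev P π) A x)) := Real.sqrt_nonneg _
    have h2 : Real.sqrt (meas π (levelSet (rev P π) A x)) ≤ 1 :=
      Real.sqrt_le_one.mpr (measF_le_one h _ x)
    have h3 : 0 ≤ Real.sqrt (meas π A) := Real.sqrt_nonneg _
    have h4 : Real.sqrt (meas π A) ≤ 1 := Real.sqrt_le_one.mpr (meas_le_one h A)
    nlinarith

open MeasureTheory in
lemma psiEvo_eq (h : IsMarkov P π) (hA0 : 0 < meas π A) :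
    psiEvo (rev P π) π A = 1 / (2 * meas π A)
      * ∫ u in Set.Ioc (0:ℝ) 1,
          (Real.sqrt (meas π (levelSet (rev P π) A u)) - Real.sqrt (meas π A)) ^ 2 := by
  have hMp : 0 < Real.sqrt (meas π A) := Real.sqrt_pos.2 hA0
  have hMs : Real.sqrt (meas π A) * Real.sqrt (meas π A) = meas π A :=
    Real.mul_self_sqrt hA0.le
  set S := ∫ u in Set.Ioc (0:ℝ) 1, Real.sqrt (meas π (levelSet (rev P π) A u)) with hS
  have hexp : (∫ u in Set.Ioc (0:ℝ) 1,
      (Real.sqrt (meas π (levelSet (rev P π) A u)) - Real.sqrt (meas π A)) ^ 2)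
      = meas π A - 2 * Real.sqrt (meas π A) * S + meas π A := by
    have hpt : ∀ u : ℝ, (Real.sqrt (meas π (levelSet (rev P π) A u))
        - Real.sqrt (meas π A)) ^ 2
        = meas π (levelSet (rev P π) A u)
          - (2 * Real.sqrt (meas π A)) * Real.sqrt (meas π (levelSet (rev P π) A u))
          + meas π A := by
      intro u
      have h1 : Real.sqrt (meas π (levelSet (rev P π) A u))
          * Real.sqrt (meas π (levelSet (rev P π) A u))
          = meas π (levelSet (rev P π) A u) := Real.mul_self_sqrt (measF_nonneg h _ u)
      nlinarith [h1, hMs]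
    simp_rw [hpt]
    have hconst : IntegrableOn (fun _ : ℝ => meas π A) (Set.Ioc (0:ℝ) 1) volume :=
      integrableOn_unit measurable_const |meas π A| fun x => le_refl _
    rw [integral_add (f := fun u => meas π (levelSet (rev P π) A u)
        - (2 * Real.sqrt (meas π A)) * Real.sqrt (meas π (levelSet (rev P π) A u)))
      (g := fun _ => meas π A)
      ((integrableOn_measF _).sub ((integrableOn_sqrtF h).const_mul _)) hconst]
    rw [integral_sub (f := fun u => meas π (levelSet (rev P π) A u))
      (g := fun u => (2 * Real.sqrt (meas π A)) * Real.sqrt (meas π (levelSet (rev P π) A u)))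
      (integrableOn_measF _) ((integrableOn_sqrtF h).const_mul _)]
    rw [integral_measF h, integral_const_mul, setIntegral_const]
    have hvol : volume.real (Set.Ioc (0:ℝ) 1) = 1 := by simp [measureReal_def, Real.volume_Ioc]
    rw [hvol, ← hS]
    simp only [smul_eq_mul]
    ring
  rw [hexp]
  unfold psiEvo
  rw [intervalIntegral.integral_of_le (by norm_num : (0:ℝ) ≤ 1)]
  have hdiv : ∀ u : ℝ, Real.sqrt (meas π (levelSet (rev P π) A u) / meas π A)
      = Real.sqrt (meas π (levelSet (rev P π) A u)) / Real.sqrt (meas π A) := by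
    intro u
    rw [Real.sqrt_div (measF_nonneg h _ u)]
  simp_rw [hdiv]
  rw [integral_div, ← hS]
  have key : Real.sqrt (meas π A) * S / meas π A = S / Real.sqrt (meas π A) := by
    rw [div_eq_div_iff hA0.ne' hMp.ne']
    linear_combination S * hMs
  have halg : 1 / (2 * meas π A) * (meas π A - 2 * Real.sqrt (meas π A) * S + meas π A)
      = 1 - Real.sqrt (meas π A) * S / meas π A := by
    field_simp
    ring
  rw [halg, key]

end Aux










/-- for a lazy, irreducible, aperiodic chain and `0 < π(A) ≤ 1/2`,
`ψ_evo(A) ≤ (1/2)·ψ̄_mod(A)`. -/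
theorem evolving_le_half_modified_spread
    (P : K → K → ℝ) (π : K → ℝ) (A : Finset K)
    (hM : IsMarkov P π) (hlazy : IsLazy P)
    (hirr : MCIrreducible P) (hap : MCAperiodic P)
    (hA0 : 0 < meas π A) (hA : meas π A ≤ 1 / 2) :
    psiEvo (rev P π) π A ≤ (1 / 2) * psiMod (rev P π) π A := by
  haveI := finite_unit
  have hIocMod : psiMod (rev P π) π A
      = (∫ t in Set.Ioc (0:ℝ) 1, Psi (rev P π) π A t / min t (1 - t)) / meas π A := by
    unfold psiMod
    rw [intervalIntegral.integral_of_le (by norm_num : (0:ℝ) ≤ 1)]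
  have hjoint := kfun_integrable_joint hM hA0 hA
  have hmarg_u : Integrable (fun u => ∫ t in Set.Ioc (0:ℝ) 1, kfun P π A t u)
      (volume.restrict (Set.Ioc (0:ℝ) 1)) := hjoint.integral_prod_right
  have hmarg_t : Integrable (fun t => ∫ u in Set.Ioc (0:ℝ) 1, kfun P π A t u)
      (volume.restrict (Set.Ioc (0:ℝ) 1)) := hjoint.integral_prod_left
  have step1 : (∫ u in Set.Ioc (0:ℝ) 1,
        (Real.sqrt (meas π (levelSet (rev P π) A u)) - Real.sqrt (meas π A)) ^ 2)
      ≤ ∫ u in Set.Ioc (0:ℝ) 1, ∫ t in Set.Ioc (0:ℝ) 1, kfun P π A t u := by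
    refine setIntegral_mono_on (integrableOn_sqF hM) hmarg_u measurableSet_Ioc
      fun u _ => ?_
    exact tint_eval (measF_nonneg hM (rev P π) u) (measF_le_one hM (rev P π) u)
      hA0 (by linarith : meas π A ≤ 1)
  have hswap : (∫ t in Set.Ioc (0:ℝ) 1, ∫ u in Set.Ioc (0:ℝ) 1, kfun P π A t u)
      = ∫ u in Set.Ioc (0:ℝ) 1, ∫ t in Set.Ioc (0:ℝ) 1, kfun P π A t u :=
    integral_integral_swap hjoint
  have step2 : (∫ t in Set.Ioc (0:ℝ) 1, ∫ u in Set.Ioc (0:ℝ) 1, kfun P π A t u)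
      ≤ ∫ t in Set.Ioc (0:ℝ) 1, Psi (rev P π) π A t / min t (1 - t) :=
    setIntegral_mono_on hmarg_t (integrableOn_PsiDiv hM hA0 hA) measurableSet_Ioc
      (fun t ht => ell_le hM hA0 hA ht)
  rw [psiEvo_eq hM hA0, hIocMod]
  have hfin : (∫ u in Set.Ioc (0:ℝ) 1,
        (Real.sqrt (meas π (levelSet (rev P π) A u)) - Real.sqrt (meas π A)) ^ 2)
      ≤ ∫ t in Set.Ioc (0:ℝ) 1, Psi (rev P π) π A t / min t (1 - t) := by
    linarith [step1, step2, hswap]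
  calc 1 / (2 * meas π A) * ∫ u in Set.Ioc (0:ℝ) 1,
        (Real.sqrt (meas π (levelSet (rev P π) A u)) - Real.sqrt (meas π A)) ^ 2
      ≤ 1 / (2 * meas π A)
        * ∫ t in Set.Ioc (0:ℝ) 1, Psi (rev P π) π A t / min t (1 - t) :=
        mul_le_mul_of_nonneg_left hfin (by positivity)
    _ = 1 / 2 * ((∫ t in Set.Ioc (0:ℝ) 1, Psi (rev P π) π A t / min t (1 - t))
        / meas π A) := by ring
end
end
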